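/- arXiv:1807.03815 — 9 statements merged into one kernel-verified Lean document; each statement's English description precedes it below -/
import Mathlib

section
/- Let H be a locally compact abelian group and W ⊆ H a compact set. Then there exists a function h in the span of convolutions of compactly supported continuous functions on H such that h ≡ 1 on W. -/
open MeasureTheory Pointwise

/-- On a locally compact abelian group `H` with Haar measure, for every compact
set `W` there is a function in `K₂(H)`, i.e. a finite linear combination of convolutions
`fᵢ * gᵢ` of compactly supported continuous functions, which is identically `1` on `W`. -/
theorem stmt_1 {H : Type*} [TopologicalSpace H] [AddCommGroup H] [IsTopologicalAddGroup H]
    [LocallyCompactSpace H] [T2Space H] [MeasurableSpace H] [BorelSpace H]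
    (haar : Measure H) [haar.IsAddHaarMeasure]
    (W : Set H) (hW : IsCompact W) :
    ∃ (n : ℕ) (c : Fin n → ℂ) (f g : Fin n → H → ℂ),
      (∀ i, Continuous (f i) ∧ HasCompactSupport (f i) ∧
        Continuous (g i) ∧ HasCompactSupport (g i)) ∧
      ∀ s ∈ W, (∑ i, c i * ∫ t, f i t * g i (s - t) ∂haar) = 1 := by
  -- pick a compact neighborhood K of 0
  obtain ⟨K, hK, hK0⟩ := exists_compact_mem_nhds (0 : H)
  -- f : bump equal to 1 on K
  obtain ⟨f, hf1, -, hfc, hf01⟩ :=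
    exists_continuous_one_zero_of_isCompact hK isClosed_empty (Set.disjoint_empty K)
  -- g : bump equal to 1 on W - tsupport f
  have hWK : IsCompact (W - tsupport f) := by
    rw [sub_eq_add_neg]
    exact hW.add (HasCompactSupport.isCompact hfc).neg
  obtain ⟨g, hg1, -, hgc, -⟩ :=
    exists_continuous_one_zero_of_isCompact hWK isClosed_empty (Set.disjoint_empty _)
  have hfint : Integrable f haar := f.continuous.integrable_of_hasCompactSupport hfc
  have hIpos : 0 < ∫ t, f t ∂haar := by
    rw [integral_pos_iff_support_of_nonneg (fun x => (hf01 x).1) hfint]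
    have hKs : K ⊆ Function.support f := fun x hx => by
      simp [hf1 hx]
    calc (0 : ENNReal) < haar (interior K) := by
          apply IsOpen.measure_pos haar isOpen_interior
          exact ⟨0, mem_interior_iff_mem_nhds.2 hK0⟩
      _ ≤ haar (Function.support f) :=
          measure_mono (interior_subset.trans hKs)
  set I : ℝ := ∫ t, f t ∂haar
  refine ⟨1, fun _ => (I : ℂ)⁻¹, fun _ x => (f x : ℂ), fun _ x => (g x : ℂ), ?_, ?_⟩
  · intro i
    refine ⟨Complex.continuous_ofReal.comp f.continuous, ?_,
      Complex.continuous_ofReal.comp g.continuous, ?_⟩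
    · exact hfc.comp_left (g := Complex.ofReal) Complex.ofReal_zero
    · exact hgc.comp_left (g := Complex.ofReal) Complex.ofReal_zero
  · intro s hs
    have key : ∀ t, (f t : ℂ) * (g (s - t) : ℂ) = (f t : ℂ) := by
      intro t
      by_cases ht : f t = 0
      · simp [ht]
      · have : s - t ∈ W - tsupport f :=
          Set.sub_mem_sub hs (subset_tsupport f ht)
        rw [hg1 this]
        simp
    simp only [Finset.sum_const, Finset.card_univ, Fintype.card_fin, one_smul]
    rw [show (∫ t, (f t : ℂ) * (g (s - t) : ℂ) ∂haar) = ∫ t, (f t : ℂ) ∂haar from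
      integral_congr_ae (Filter.Eventually.of_forall key)]
    rw [show (∫ t, ((f t : ℝ) : ℂ) ∂haar) = ((∫ t, f t ∂haar : ℝ) : ℂ) from integral_ofReal]
    rw [← Complex.ofReal_inv, ← Complex.ofReal_mul, inv_mul_cancel₀ hIpos.ne']
    simp
end

section
/- Let G be a locally compact abelian group, K and K' compact subsets of G with K contained in the interior of K'. If ν is a finite (complex Radon) measure on G and μ is a translation bounded measure on G, then |μ * ν|(K) ≤ ‖μ‖_{K'} · |ν|(G), where ‖μ‖_{K'} = sup_{t ∈ G} |μ|(t + K'). -/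
open MeasureTheory

/-- If `K ⊆ interior K'` are compact sets, `ν` a finite measure and `μ` a
translation bounded measure on a locally compact abelian group `G`, then
`|μ * ν|(K) ≤ ‖μ‖_{K'} · |ν|(G)`, where `‖μ‖_{K'} = sup_t |μ|(t + K')` and the
convolution is `(μ * ν)(A) = ∫∫ 1_A(s + t) dν(s) dμ(t)`, i.e. the pushforward of
`μ.prod ν` under addition. -/
theorem stmt_2 {G : Type*} [TopologicalSpace G] [AddCommGroup G] [IsTopologicalAddGroup G]
    [LocallyCompactSpace G] [T2Space G] [SecondCountableTopology G]
    [MeasurableSpace G] [BorelSpace G]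
    (K K' : Set G) (hK : IsCompact K) (hK' : IsCompact K') (hKK' : K ⊆ interior K')
    (μ ν : Measure G) [IsFiniteMeasure ν]
    (hμtb : ∀ C : Set G, IsCompact C → (⨆ t : G, μ ((t + ·) '' C)) < ⊤) :
    ((μ.prod ν).map (fun p : G × G => p.1 + p.2)) K ≤
      (⨆ t : G, μ ((t + ·) '' K')) * ν Set.univ := by
  have hfin : IsFiniteMeasureOnCompacts μ := by
    constructor
    intro C hC
    have h0 : μ C ≤ ⨆ t : G, μ ((t + ·) '' C) := by
      have : μ ((0 + ·) '' C) ≤ ⨆ t : G, μ ((t + ·) '' C) := le_iSup (fun t : G => μ ((t + ·) '' C)) 0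
      simpa using this
    exact h0.trans_lt (hμtb C hC)
  have hsf : SigmaFinite μ := by infer_instance
  have hmeas : Measurable (fun p : G × G => p.1 + p.2) := measurable_add
  have hKm : MeasurableSet K := hK.measurableSet
  rw [Measure.map_apply hmeas hKm,
    Measure.prod_apply_symm (hmeas hKm)]
  have hbound : ∀ y : G, μ ((fun x => (x, y)) ⁻¹' ((fun p : G × G => p.1 + p.2) ⁻¹' K))
      ≤ ⨆ t : G, μ ((t + ·) '' K') := by
    intro y
    refine le_trans ?_ (le_iSup (fun t : G => μ ((t + ·) '' K')) (-y))
    apply measure_mono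
    intro x hx
    have hx' : x + y ∈ K := hx
    refine ⟨x + y, (interior_subset (hKK' hx')), by rw [add_comm x y]; exact neg_add_cancel_left y x⟩
  calc ∫⁻ y, μ ((fun x => (x, y)) ⁻¹' ((fun p : G × G => p.1 + p.2) ⁻¹' K)) ∂ν
      ≤ ∫⁻ _, (⨆ t : G, μ ((t + ·) '' K')) ∂ν := lintegral_mono hbound
    _ = (⨆ t : G, μ ((t + ·) '' K')) * ν Set.univ := lintegral_const _
end

section
/- Let G be a locally compact abelian group. If ν is a finite measure on G and μ is a norm almost periodic translation bounded measure on G, then the convolution μ * ν is norm almost periodic. -/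
open MeasureTheory
open scoped ENNReal

/-- The `K`-norm distance between two (positive) translation bounded measures:
`sup_{s ∈ G} sup { |μ(A) - ν(A)| : A measurable, A ⊆ s + K }`, a variant of the
total variation norm `‖μ - ν‖_K`. -/
noncomputable def normDist {G : Type*} [AddCommGroup G] [MeasurableSpace G]
    (μ ν : Measure G) (K : Set G) : ℝ :=
  ⨆ s : G, ⨆ A : {A : Set G // MeasurableSet A ∧ A ⊆ (s + ·) '' K},
    |(μ A.1).toReal - (ν A.1).toReal|

lemma preimage_addconst {G : Type*} [AddCommGroup G] (s y : G) (K : Set G) :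
    (fun x => x + y) ⁻¹' ((s + ·) '' K) = ((s - y) + ·) '' K := by
  ext x
  simp only [Set.mem_preimage, Set.mem_image]
  constructor
  · rintro ⟨k, hk, e⟩
    exact ⟨k, hk, by rw [show s - y + k = s + k - y by abel, e, add_sub_cancel_right]⟩
  · rintro ⟨k, hk, rfl⟩
    exact ⟨k, hk, by abel⟩

lemma preimage_constadd {G : Type*} [AddCommGroup G] (t s : G) (K : Set G) :
    (t + ·) ⁻¹' ((s + ·) '' K) = ((s - t) + ·) '' K := by
  ext x
  simp only [Set.mem_preimage, Set.mem_image]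
  constructor
  · rintro ⟨k, hk, e⟩
    exact ⟨k, hk, by
      have : t + (s - t + k) = t + x := by rw [← e]; abel
      exact add_left_cancel this⟩
  · rintro ⟨k, hk, rfl⟩
    exact ⟨k, hk, by abel⟩

lemma le_normDist {G : Type*} [AddCommGroup G] [MeasurableSpace G]
    (μ₁ μ₂ : Measure G) (K : Set G) (M : ℝ)
    (hM : ∀ (s : G) (A : Set G), MeasurableSet A → A ⊆ (s + ·) '' K →
      |(μ₁ A).toReal - (μ₂ A).toReal| ≤ M)
    (s : G) (A : Set G) (hAm : MeasurableSet A) (hAs : A ⊆ (s + ·) '' K) :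
    |(μ₁ A).toReal - (μ₂ A).toReal| ≤ normDist μ₁ μ₂ K := by
  have hM0 : (0 : ℝ) ≤ M := by
    simpa using hM s ∅ MeasurableSet.empty (Set.empty_subset _)
  have hbdd : ∀ u : G, BddAbove (Set.range fun A : {A : Set G // MeasurableSet A ∧ A ⊆ (u + ·) '' K} =>
      |(μ₁ A.1).toReal - (μ₂ A.1).toReal|) := by
    intro u
    refine ⟨M, ?_⟩
    rintro x ⟨B, rfl⟩
    exact hM u B.1 B.2.1 B.2.2
  have h1 : |(μ₁ A).toReal - (μ₂ A).toReal| ≤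
      ⨆ B : {A : Set G // MeasurableSet A ∧ A ⊆ (s + ·) '' K},
        |(μ₁ B.1).toReal - (μ₂ B.1).toReal| :=
    le_ciSup (hbdd s) ⟨A, hAm, hAs⟩
  refine h1.trans (le_ciSup (f := fun u : G =>
      ⨆ B : {A : Set G // MeasurableSet A ∧ A ⊆ (u + ·) '' K},
        |(μ₁ B.1).toReal - (μ₂ B.1).toReal|) ?_ s)
  refine ⟨M, ?_⟩
  rintro x ⟨u, rfl⟩
  exact Real.iSup_le (fun B => hM u B.1 B.2.1 B.2.2) hM0

lemma normDist_le {G : Type*} [AddCommGroup G] [MeasurableSpace G]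
    (μ₁ μ₂ : Measure G) (K : Set G) (M : ℝ) (hM0 : 0 ≤ M)
    (hM : ∀ (s : G) (A : Set G), MeasurableSet A → A ⊆ (s + ·) '' K →
      |(μ₁ A).toReal - (μ₂ A).toReal| ≤ M) :
    normDist μ₁ μ₂ K ≤ M :=
  Real.iSup_le (fun u => Real.iSup_le (fun B => hM u B.1 B.2.1 B.2.2) hM0) hM0

/-- On a locally compact abelian group, the convolution of a norm almost
periodic translation bounded measure `μ` with a finite measure `ν` is norm almost
periodic.  Here `T_t μ = μ.map (t + ·)` and norm almost periodicity w.r.t. a fixed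
compact `K` with nonempty interior means: for every `ε > 0` the set of `t` with
`‖T_t μ - μ‖_K < ε` is relatively dense. -/
theorem stmt_3 {G : Type*} [TopologicalSpace G] [AddCommGroup G] [IsTopologicalAddGroup G]
    [LocallyCompactSpace G] [T2Space G] [SecondCountableTopology G]
    [MeasurableSpace G] [BorelSpace G]
    (K : Set G) (hK : IsCompact K) (hKint : (interior K).Nonempty)
    (μ ν : Measure G) [IsFiniteMeasure ν]
    (hμtb : ∀ C : Set G, IsCompact C → (⨆ t : G, μ ((t + ·) '' C)) < ⊤)
    (hμap : ∀ ε > (0 : ℝ), ∃ C : Set G, IsCompact C ∧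
      ∀ g : G, ∃ t : G, normDist (μ.map (t + ·)) μ K < ε ∧ g ∈ (t + ·) '' C) :
    ∀ ε > (0 : ℝ), ∃ C : Set G, IsCompact C ∧
      ∀ g : G, ∃ t : G,
        normDist ((((μ.prod ν).map (fun p : G × G => p.1 + p.2)).map (t + ·)))
          ((μ.prod ν).map (fun p : G × G => p.1 + p.2)) K < ε ∧
        g ∈ (t + ·) '' C := by
  haveI : IsFiniteMeasureOnCompacts μ := by
    constructor
    intro C' hC'
    have h0 : μ C' = μ ((0 + ·) '' C') := by simp
    exact h0 ▸ lt_of_le_of_lt (le_iSup (fun u => μ ((u + ·) '' C')) 0) (hμtb C' hC')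
  haveI : SFinite μ := inferInstance
  intro ε hε
  set νu : ℝ := (ν Set.univ).toReal with hνudef
  have hνu0 : (0 : ℝ) ≤ νu := ENNReal.toReal_nonneg
  have hden : (0 : ℝ) < νu + 1 := by linarith
  obtain ⟨C, hC, hCmem⟩ := hμap (ε / (νu + 1)) (by positivity)
  refine ⟨C, hC, fun g => ?_⟩
  obtain ⟨t, hD, hg⟩ := hCmem g
  refine ⟨t, ?_, hg⟩
  set D := normDist (μ.map (t + ·)) μ K with hDdef
  set M : ℝ≥0∞ := ⨆ u : G, μ ((u + ·) '' K) with hMdef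
  have hMlt : M < ⊤ := hμtb K hK
  have hsub : ∀ (u : G) (B : Set G), B ⊆ (u + ·) '' K → μ B ≤ M := fun u B hB =>
    (measure_mono hB).trans (le_iSup (fun u => μ ((u + ·) '' K)) u)
  have hmap_le : ∀ (u : G) (B : Set G), MeasurableSet B → B ⊆ (u + ·) '' K →
      (μ.map (t + ·)) B ≤ M := by
    intro u B hBm hB
    rw [Measure.map_apply (measurable_const_add t) hBm]
    exact hsub (u - t) _ (by rw [← preimage_constadd t u K]; exact Set.preimage_mono hB)
  have hMabs : ∀ (s : G) (A : Set G), MeasurableSet A → A ⊆ (s + ·) '' K →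
      |((μ.map (t + ·)) A).toReal - (μ A).toReal| ≤ M.toReal := by
    intro s A hAm hAs
    have h1 := ENNReal.toReal_mono hMlt.ne (hmap_le s A hAm hAs)
    have h2 := ENNReal.toReal_mono hMlt.ne (hsub s A hAs)
    have h3 : (0:ℝ) ≤ ((μ.map (t + ·)) A).toReal := ENNReal.toReal_nonneg
    have h4 : (0:ℝ) ≤ (μ A).toReal := ENNReal.toReal_nonneg
    rw [abs_sub_le_iff]
    constructor <;> linarith
  have hD0 : (0 : ℝ) ≤ D := by
    simpa using le_normDist (μ.map (t + ·)) μ K M.toReal hMabs 0 ∅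
      MeasurableSet.empty (Set.empty_subset _)
  set lam : Measure G := (μ.prod ν).map (fun p : G × G => p.1 + p.2) with hlamdef
  have hadd : Measurable (fun p : G × G => p.1 + p.2) := measurable_fst.add measurable_snd
  have hconv : ∀ B : Set G, MeasurableSet B →
      lam B = ∫⁻ y, μ ((fun x => x + y) ⁻¹' B) ∂ν := by
    intro B hB
    rw [hlamdef, Measure.map_apply hadd hB, Measure.prod_apply_symm (hadd hB)]
    rfl
  have key : ∀ (s : G) (A : Set G), MeasurableSet A → A ⊆ (s + ·) '' K →
      |((lam.map (t + ·)) A).toReal - (lam A).toReal| ≤ D * νu := by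
    intro s A hAm hAs
    set f : G → ℝ≥0∞ := fun y => (μ.map (t + ·)) ((fun x => x + y) ⁻¹' A) with hfdef
    set gf : G → ℝ≥0∞ := fun y => μ ((fun x => x + y) ⁻¹' A) with hgdef
    have hBym : ∀ y : G, MeasurableSet ((fun x => x + y) ⁻¹' A) := fun y =>
      (measurable_add_const y) hAm
    have hBysub : ∀ y : G, (fun x => x + y) ⁻¹' A ⊆ ((s - y) + ·) '' K := fun y => by
      rw [← preimage_addconst s y K]; exact Set.preimage_mono hAs
    have hlamA : lam A = ∫⁻ y, gf y ∂ν := hconv A hAm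
    have hlamtA : (lam.map (t + ·)) A = ∫⁻ y, f y ∂ν := by
      rw [Measure.map_apply (measurable_const_add t) hAm,
        hconv _ ((measurable_const_add t) hAm)]
      refine lintegral_congr fun y => ?_
      show μ ((fun x => x + y) ⁻¹' ((fun x => t + x) ⁻¹' A)) =
        (Measure.map (fun x => t + x) μ) ((fun x => x + y) ⁻¹' A)
      rw [Measure.map_apply (measurable_const_add t) (hBym y)]
      congr 1
      ext x
      simp [Set.mem_preimage, add_assoc]
    have hfle : ∀ y, f y ≤ M := fun y => hmap_le (s - y) _ (hBym y) (hBysub y)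
    have hgle : ∀ y, gf y ≤ M := fun y => hsub (s - y) _ (hBysub y)
    have habs : ∀ y, |(f y).toReal - (gf y).toReal| ≤ D := fun y =>
      le_normDist (μ.map (t + ·)) μ K M.toReal hMabs (s - y) _ (hBym y) (hBysub y)
    have hpw1 : ∀ y, f y ≤ gf y + ENNReal.ofReal D := by
      intro y
      rw [← ENNReal.ofReal_toReal (lt_of_le_of_lt (hfle y) hMlt).ne,
        ← ENNReal.ofReal_toReal (lt_of_le_of_lt (hgle y) hMlt).ne,
        ← ENNReal.ofReal_add ENNReal.toReal_nonneg hD0]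
      refine ENNReal.ofReal_le_ofReal ?_
      have := (abs_sub_le_iff.mp (habs y)).1
      linarith
    have hpw2 : ∀ y, gf y ≤ f y + ENNReal.ofReal D := by
      intro y
      rw [← ENNReal.ofReal_toReal (lt_of_le_of_lt (hfle y) hMlt).ne,
        ← ENNReal.ofReal_toReal (lt_of_le_of_lt (hgle y) hMlt).ne,
        ← ENNReal.ofReal_add ENNReal.toReal_nonneg hD0]
      refine ENNReal.ofReal_le_ofReal ?_
      have := (abs_sub_le_iff.mp (habs y)).2
      linarith
    have hcfin : ENNReal.ofReal D * ν Set.univ < ⊤ :=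
      ENNReal.mul_lt_top ENNReal.ofReal_lt_top (measure_lt_top ν _)
    have hffin : ∫⁻ y, f y ∂ν < ⊤ := by
      calc ∫⁻ y, f y ∂ν ≤ ∫⁻ _, M ∂ν := lintegral_mono fun y => hfle y
      _ = M * ν Set.univ := lintegral_const M
      _ < ⊤ := ENNReal.mul_lt_top hMlt (measure_lt_top ν _)
    have hgfin : ∫⁻ y, gf y ∂ν < ⊤ := by
      calc ∫⁻ y, gf y ∂ν ≤ ∫⁻ _, M ∂ν := lintegral_mono fun y => hgle y
      _ = M * ν Set.univ := lintegral_const M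
      _ < ⊤ := ENNReal.mul_lt_top hMlt (measure_lt_top ν _)
    have hint1 : ∫⁻ y, f y ∂ν ≤ ∫⁻ y, gf y ∂ν + ENNReal.ofReal D * ν Set.univ := by
      calc ∫⁻ y, f y ∂ν ≤ ∫⁻ y, gf y + ENNReal.ofReal D ∂ν := lintegral_mono hpw1
      _ = ∫⁻ y, gf y ∂ν + ENNReal.ofReal D * ν Set.univ := by
          rw [lintegral_add_right _ measurable_const, lintegral_const]
    have hint2 : ∫⁻ y, gf y ∂ν ≤ ∫⁻ y, f y ∂ν + ENNReal.ofReal D * ν Set.univ := by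
      calc ∫⁻ y, gf y ∂ν ≤ ∫⁻ y, f y + ENNReal.ofReal D ∂ν := lintegral_mono hpw2
      _ = ∫⁻ y, f y ∂ν + ENNReal.ofReal D * ν Set.univ := by
          rw [lintegral_add_right _ measurable_const, lintegral_const]
    have he : (ENNReal.ofReal D * ν Set.univ).toReal = D * νu := by
      rw [ENNReal.toReal_mul, ENNReal.toReal_ofReal hD0]
    have h1 : (∫⁻ y, f y ∂ν).toReal ≤ (∫⁻ y, gf y ∂ν).toReal + D * νu := by
      have := ENNReal.toReal_mono (by
        exact (ENNReal.add_lt_top.mpr ⟨hgfin, hcfin⟩).ne) hint1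
      rwa [ENNReal.toReal_add hgfin.ne hcfin.ne, he] at this
    have h2 : (∫⁻ y, gf y ∂ν).toReal ≤ (∫⁻ y, f y ∂ν).toReal + D * νu := by
      have := ENNReal.toReal_mono (by
        exact (ENNReal.add_lt_top.mpr ⟨hffin, hcfin⟩).ne) hint2
      rwa [ENNReal.toReal_add hffin.ne hcfin.ne, he] at this
    rw [hlamA, hlamtA, abs_sub_le_iff]
    constructor <;> linarith
  have hfinal : normDist (lam.map (t + ·)) lam K ≤ D * νu :=
    normDist_le _ _ _ _ (mul_nonneg hD0 hνu0) key
  refine lt_of_le_of_lt hfinal ?_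
  calc D * νu ≤ D * (νu + 1) := mul_le_mul_of_nonneg_left (by linarith) hD0
  _ < (ε / (νu + 1)) * (νu + 1) := mul_lt_mul_of_pos_right hD hden
  _ = ε := div_mul_cancel₀ ε hden.ne'
end

section
/- Let G be a locally compact abelian group and μ a norm almost periodic translation bounded measure on G. Then each of the components μ_pp, μ_ac, μ_sc of the Lebesgue decomposition of μ (with respect to Haar measure) is norm almost periodic. Moreover, for each ε > 0, the set of ε-norm almost periods of μ is simultaneously a set of ε-norm almost periods for μ_pp, μ_ac and μ_sc. -/
open MeasureTheory

open Set

lemma key_eq {G : Type*} [MeasurableSpace G] (ν ρ σ μ : Measure G)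
    (hd : ∀ A : Set G, μ A = ν A + ρ A + σ A)
    (A W : Set G) (h1 : ν Wᶜ = 0) (h2 : ρ W = 0) (h3 : σ W = 0) :
    μ (A ∩ W) = ν A := by
  have hρ : ρ (A ∩ W) = 0 := measure_mono_null inter_subset_right h2
  have hσ : σ (A ∩ W) = 0 := measure_mono_null inter_subset_right h3
  have hν : ν (A ∩ W) = ν A := by
    refine le_antisymm (measure_mono inter_subset_left) ?_
    calc ν A = ν (A ∩ W ∪ A ∩ Wᶜ) := by rw [inter_union_compl]
      _ ≤ ν (A ∩ W) + ν (A ∩ Wᶜ) := measure_union_le _ _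
      _ = ν (A ∩ W) := by
          rw [measure_mono_null inter_subset_right h1, add_zero]
  rw [hd, hρ, hσ, add_zero, add_zero, hν]

lemma abs_toReal_sub_le {x y M : ENNReal} (hM : M ≠ ⊤) (hx : x ≤ M) (hy : y ≤ M) :
    |x.toReal - y.toReal| ≤ 2 * M.toReal := by
  have h1 : x.toReal ≤ M.toReal := ENNReal.toReal_mono hM hx
  have h2 : y.toReal ≤ M.toReal := ENNReal.toReal_mono hM hy
  have h3 : (0:ℝ) ≤ x.toReal := ENNReal.toReal_nonneg
  have h4 : (0:ℝ) ≤ y.toReal := ENNReal.toReal_nonneg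
  rw [abs_le]; constructor <;> linarith

lemma normDist_le_of_carrier {G : Type*} [AddCommGroup G] [MeasurableSpace G]
    [MeasurableAdd G]
    (μ ν : Measure G) (K : Set G) (t : G)
    (M : ENNReal) (hM : M ≠ ⊤) (hbound : ∀ s : G, μ ((s + ·) '' K) ≤ M)
    (W : Set G) (hW : MeasurableSet W)
    (h1 : ∀ A : Set G, ν A = μ (A ∩ W))
    (h2 : ∀ A : Set G, ν ((t + ·) ⁻¹' A) = μ ((t + ·) ⁻¹' (A ∩ W))) :
    normDist (ν.map (t + ·)) ν K ≤ normDist (μ.map (t + ·)) μ K := by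
  have hmeas : Measurable (t + · : G → G) := measurable_const_add t
  -- bound for μ-terms
  have hsub : ∀ s : G, (t + ·) ⁻¹' ((s + ·) '' K) ⊆ ((s - t) + ·) '' K := by
    intro s x hx
    obtain ⟨k, hk, hkx⟩ := hx
    refine ⟨k, hk, ?_⟩
    show s - t + k = x
    have hkx' : s + k = t + x := hkx
    rw [sub_add_eq_add_sub, sub_eq_iff_eq_add, hkx', add_comm]
  have hterm : ∀ (s : G) (A : {A : Set G // MeasurableSet A ∧ A ⊆ (s + ·) '' K}),
      |((μ.map (t + ·)) A.1).toReal - (μ A.1).toReal| ≤ 2 * M.toReal := by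
    intro s A
    rw [Measure.map_apply hmeas A.2.1]
    refine abs_toReal_sub_le hM ?_ ((measure_mono A.2.2).trans (hbound s))
    calc μ ((t + ·) ⁻¹' A.1) ≤ μ (((s - t) + ·) '' K) :=
          measure_mono ((preimage_mono A.2.2).trans (hsub s))
      _ ≤ M := hbound (s - t)
  have hnn : (0:ℝ) ≤ normDist (μ.map (t + ·)) μ K :=
    Real.iSup_nonneg fun s => Real.iSup_nonneg fun A => abs_nonneg _
  refine Real.iSup_le (fun s => Real.iSup_le (fun A => ?_) hnn) hnn
  have hA'm : MeasurableSet (A.1 ∩ W) := A.2.1.inter hW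
  have hA's : A.1 ∩ W ⊆ (s + ·) '' K := inter_subset_left.trans A.2.2
  have e1 : (ν.map (t + ·)) A.1 = (μ.map (t + ·)) (A.1 ∩ W) := by
    rw [Measure.map_apply hmeas A.2.1, Measure.map_apply hmeas hA'm, h2]
  have e2 : ν A.1 = μ (A.1 ∩ W) := h1 _
  calc |((ν.map (t + ·)) A.1).toReal - (ν A.1).toReal|
      = |((μ.map (t + ·)) (A.1 ∩ W)).toReal - (μ (A.1 ∩ W)).toReal| := by rw [e1, e2]
    _ ≤ ⨆ B : {B : Set G // MeasurableSet B ∧ B ⊆ (s + ·) '' K},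
        |((μ.map (t + ·)) B.1).toReal - (μ B.1).toReal| := by
        refine le_ciSup (f := fun B : {B : Set G // MeasurableSet B ∧ B ⊆ (s + ·) '' K} =>
          |((μ.map (t + ·)) B.1).toReal - (μ B.1).toReal|) ⟨2 * M.toReal, ?_⟩
          (⟨A.1 ∩ W, hA'm, hA's⟩ : {B : Set G // MeasurableSet B ∧ B ⊆ (s + ·) '' K})
        rintro _ ⟨B, rfl⟩
        exact hterm s B
    _ ≤ normDist (μ.map (t + ·)) μ K := by
        show _ ≤ ⨆ u : G, ⨆ B : {B : Set G // MeasurableSet B ∧ B ⊆ (u + ·) '' K},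
          |((μ.map (t + ·)) B.1).toReal - (μ B.1).toReal|
        refine le_ciSup (f := fun u : G =>
          ⨆ B : {B : Set G // MeasurableSet B ∧ B ⊆ (u + ·) '' K},
            |((μ.map (t + ·)) B.1).toReal - (μ B.1).toReal|) ⟨2 * M.toReal, ?_⟩ s
        rintro _ ⟨u, rfl⟩
        exact Real.iSup_le (fun B => hterm u B) (by positivity)

/-- If `μ` is a norm almost periodic translation bounded measure on a
locally compact abelian group `G` with Lebesgue decomposition `μ = μpp + μac + μsc`
(w.r.t. Haar measure), then each of `μpp, μac, μsc` is norm almost periodic; moreover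
every `ε`-norm almost period of `μ` is an `ε`-norm almost period of each of
`μpp`, `μac` and `μsc`. -/
theorem stmt_5 {G : Type*} [TopologicalSpace G] [AddCommGroup G] [IsTopologicalAddGroup G]
    [LocallyCompactSpace G] [T2Space G] [MeasurableSpace G] [BorelSpace G]
    (haar : Measure G) [haar.IsAddHaarMeasure]
    (K : Set G) (hK : IsCompact K) (hKint : (interior K).Nonempty)
    (μ μpp μac μsc : Measure G)
    (hμtb : ∀ C : Set G, IsCompact C → (⨆ t : G, μ ((t + ·) '' C)) < ⊤)
    (hdec : μ = μpp + μac + μsc)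
    (hpp : ∃ D : Set G, D.Countable ∧ μpp Dᶜ = 0)
    (hac : μac ≪ haar) (hac' : ∀ x : G, μac {x} = 0)
    (hsc : μsc ⟂ₘ haar) (hsc' : ∀ x : G, μsc {x} = 0)
    (hμap : ∀ ε > (0 : ℝ), ∃ C : Set G, IsCompact C ∧
      ∀ g : G, ∃ t : G, normDist (μ.map (t + ·)) μ K < ε ∧ g ∈ (t + ·) '' C) :
    (∀ ν ∈ ({μpp, μac, μsc} : Set (Measure G)),
      ∀ ε > (0 : ℝ), ∃ C : Set G, IsCompact C ∧
        ∀ g : G, ∃ t : G, normDist (ν.map (t + ·)) ν K < ε ∧ g ∈ (t + ·) '' C) ∧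
    (∀ ε > (0 : ℝ), ∀ t : G, normDist (μ.map (t + ·)) μ K < ε →
      ∀ ν ∈ ({μpp, μac, μsc} : Set (Measure G)),
        normDist (ν.map (t + ·)) ν K < ε) := by
  haveI : NullSingletonClass μac := ⟨hac'⟩
  haveI : NullSingletonClass μsc := ⟨hsc'⟩
  obtain ⟨D, hDct, hD0⟩ := hpp
  obtain ⟨S, hSm, hS0, hScompl⟩ := hsc
  have hDm : MeasurableSet D := hDct.measurableSet
  have hacS : μac Sᶜ = 0 := hac hScompl
  have hd_pp : ∀ A : Set G, μ A = μpp A + μac A + μsc A := by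
    intro A; rw [hdec]; simp
  have hd_ac : ∀ A : Set G, μ A = μac A + μpp A + μsc A := by
    intro A; rw [hd_pp]; ring
  have hd_sc : ∀ A : Set G, μ A = μsc A + μpp A + μac A := by
    intro A; rw [hd_pp]; ring
  have main : ∀ t : G, ∀ ν ∈ ({μpp, μac, μsc} : Set (Measure G)),
      normDist (ν.map (t + ·)) ν K ≤ normDist (μ.map (t + ·)) μ K := by
    intro t ν hν
    have hM : (⨆ u : G, μ ((u + ·) '' K)) ≠ ⊤ := (hμtb K hK).ne
    have hbound : ∀ s : G, μ ((s + ·) '' K) ≤ ⨆ u : G, μ ((u + ·) '' K) :=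
      fun s => le_iSup (fun u => μ ((u + ·) '' K)) s
    have trtr : ∀ (a : G) (X : Set G), (a + ·) ⁻¹' ((-a + ·) ⁻¹' X) = X := by
      intro a X; ext x; simp
    have trtr' : ∀ (a : G) (X : Set G), (-a + ·) ⁻¹' ((a + ·) ⁻¹' X) = X := by
      intro a X; ext x; simp
    have hS'm : MeasurableSet (S ∩ ((t + ·) ⁻¹' S) ∩ ((-t + ·) ⁻¹' S)) :=
      (hSm.inter (hSm.preimage (measurable_const_add t))).inter
        (hSm.preimage (measurable_const_add (-t)))
    have hscS' : μsc (S ∩ ((t + ·) ⁻¹' S) ∩ ((-t + ·) ⁻¹' S)) = 0 :=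
      measure_mono_null (inter_subset_left.trans inter_subset_left) hS0
    have hsc_trt : μsc ((t + ·) ⁻¹' (S ∩ ((t + ·) ⁻¹' S) ∩ ((-t + ·) ⁻¹' S))) = 0 := by
      refine measure_mono_null ?_ hS0
      intro x hx
      have : x ∈ (t + ·) ⁻¹' ((-t + ·) ⁻¹' S) := preimage_mono inter_subset_right hx
      rwa [trtr] at this
    have hsc_trnt : μsc ((-t + ·) ⁻¹' (S ∩ ((t + ·) ⁻¹' S) ∩ ((-t + ·) ⁻¹' S))) = 0 := by
      refine measure_mono_null ?_ hS0
      intro x hx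
      have : x ∈ (-t + ·) ⁻¹' ((t + ·) ⁻¹' S) :=
        preimage_mono (inter_subset_left.trans inter_subset_right) hx
      rwa [trtr'] at this
    have hhaarS'c : haar (S ∩ ((t + ·) ⁻¹' S) ∩ ((-t + ·) ⁻¹' S))ᶜ = 0 := by
      have hrw : (S ∩ ((t + ·) ⁻¹' S) ∩ ((-t + ·) ⁻¹' S))ᶜ
          = (Sᶜ ∪ (t + ·) ⁻¹' Sᶜ) ∪ (-t + ·) ⁻¹' Sᶜ := by
        rw [compl_inter, compl_inter, preimage_compl, preimage_compl]
      rw [hrw]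
      refine measure_union_null (measure_union_null hScompl ?_) ?_
      · rw [measure_preimage_add]; exact hScompl
      · rw [measure_preimage_add]; exact hScompl
    have hacS'c : μac (S ∩ ((t + ·) ⁻¹' S) ∩ ((-t + ·) ⁻¹' S))ᶜ = 0 := hac hhaarS'c
    have hac_tr : ∀ a : G, μac ((a + ·) ⁻¹' (S ∩ ((t + ·) ⁻¹' S) ∩ ((-t + ·) ⁻¹' S))ᶜ) = 0 := by
      intro a
      refine hac ?_
      rw [measure_preimage_add]; exact hhaarS'c
    have hctD : ∀ a : G, ((a + ·) ⁻¹' D).Countable :=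
      fun a => hDct.preimage (add_right_injective a)
    simp only [Set.mem_insert_iff, Set.mem_singleton_iff] at hν
    rcases hν with h | h | h <;> rw [h]
    · -- pure point part
      have hWm : MeasurableSet (D ∪ ((-t + ·) ⁻¹' D)) :=
        hDm.union (hDm.preimage (measurable_const_add (-t)))
      have hWct : (D ∪ ((-t + ·) ⁻¹' D)).Countable := hDct.union (hctD (-t))
      have hWpre : (t + ·) ⁻¹' (D ∪ ((-t + ·) ⁻¹' D)) = ((t + ·) ⁻¹' D) ∪ D := by
        rw [preimage_union, trtr]
      have hWprect : ((t + ·) ⁻¹' (D ∪ ((-t + ·) ⁻¹' D))).Countable := by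
        rw [hWpre]; exact (hctD t).union hDct
      refine normDist_le_of_carrier μ μpp K t _ hM hbound (D ∪ ((-t + ·) ⁻¹' D)) hWm ?_ ?_
      · intro A
        exact (key_eq μpp μac μsc μ hd_pp A _
          (measure_mono_null (compl_subset_compl.2 subset_union_left) hD0)
          (hWct.measure_zero _) (hWct.measure_zero _)).symm
      · intro A
        rw [preimage_inter]
        refine (key_eq μpp μac μsc μ hd_pp _ _ ?_
          (hWprect.measure_zero _) (hWprect.measure_zero _)).symm
        refine measure_mono_null (compl_subset_compl.2 ?_) hD0
        rw [hWpre]; exact subset_union_right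
    · -- absolutely continuous part
      have hEm : MeasurableSet ((S ∩ ((t + ·) ⁻¹' S) ∩ ((-t + ·) ⁻¹' S)) ∩ Dᶜ) :=
        hS'm.inter hDm.compl
      have hEc : ((S ∩ ((t + ·) ⁻¹' S) ∩ ((-t + ·) ⁻¹' S)) ∩ Dᶜ)ᶜ
          = (S ∩ ((t + ·) ⁻¹' S) ∩ ((-t + ·) ⁻¹' S))ᶜ ∪ D := by
        rw [compl_inter, compl_compl]
      have hacEc : μac ((S ∩ ((t + ·) ⁻¹' S) ∩ ((-t + ·) ⁻¹' S)) ∩ Dᶜ)ᶜ = 0 := by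
        rw [hEc]
        exact measure_union_null hacS'c (hDct.measure_zero _)
      have hacEc' : ∀ a : G,
          μac ((a + ·) ⁻¹' ((S ∩ ((t + ·) ⁻¹' S) ∩ ((-t + ·) ⁻¹' S)) ∩ Dᶜ)ᶜ) = 0 := by
        intro a
        rw [hEc, preimage_union]
        exact measure_union_null (hac_tr a) ((hctD a).measure_zero _)
      have hWm : MeasurableSet (((S ∩ ((t + ·) ⁻¹' S) ∩ ((-t + ·) ⁻¹' S)) ∩ Dᶜ)
          ∩ ((-t + ·) ⁻¹' ((S ∩ ((t + ·) ⁻¹' S) ∩ ((-t + ·) ⁻¹' S)) ∩ Dᶜ))) :=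
        hEm.inter (hEm.preimage (measurable_const_add (-t)))
      have hWpre : (t + ·) ⁻¹' (((S ∩ ((t + ·) ⁻¹' S) ∩ ((-t + ·) ⁻¹' S)) ∩ Dᶜ)
            ∩ ((-t + ·) ⁻¹' ((S ∩ ((t + ·) ⁻¹' S) ∩ ((-t + ·) ⁻¹' S)) ∩ Dᶜ)))
          = ((t + ·) ⁻¹' ((S ∩ ((t + ·) ⁻¹' S) ∩ ((-t + ·) ⁻¹' S)) ∩ Dᶜ))
            ∩ ((S ∩ ((t + ·) ⁻¹' S) ∩ ((-t + ·) ⁻¹' S)) ∩ Dᶜ) := by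
        rw [preimage_inter, trtr]
      refine normDist_le_of_carrier μ μac K t _ hM hbound _ hWm ?_ ?_
      · intro A
        refine (key_eq μac μpp μsc μ hd_ac A _ ?_ ?_ ?_).symm
        · rw [compl_inter, ← preimage_compl]
          exact measure_union_null hacEc (hacEc' (-t))
        · exact measure_mono_null (inter_subset_left.trans inter_subset_right) hD0
        · exact measure_mono_null
            (inter_subset_left.trans inter_subset_left) hscS'
      · intro A
        rw [preimage_inter]
        refine (key_eq μac μpp μsc μ hd_ac _ _ ?_ ?_ ?_).symm
        · rw [hWpre, compl_inter, ← preimage_compl]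
          exact measure_union_null (hacEc' t) hacEc
        · rw [hWpre]
          exact measure_mono_null (inter_subset_right.trans inter_subset_right) hD0
        · rw [hWpre]
          exact measure_mono_null
            (inter_subset_left.trans (preimage_mono inter_subset_left)) hsc_trt
    · -- singular continuous part
      have hFm : MeasurableSet ((S ∩ ((t + ·) ⁻¹' S) ∩ ((-t + ·) ⁻¹' S))ᶜ ∩ Dᶜ) :=
        hS'm.compl.inter hDm.compl
      have hFc : ((S ∩ ((t + ·) ⁻¹' S) ∩ ((-t + ·) ⁻¹' S))ᶜ ∩ Dᶜ)ᶜ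
          = (S ∩ ((t + ·) ⁻¹' S) ∩ ((-t + ·) ⁻¹' S)) ∪ D := by
        rw [compl_inter, compl_compl, compl_compl]
      have hscFc : μsc ((S ∩ ((t + ·) ⁻¹' S) ∩ ((-t + ·) ⁻¹' S))ᶜ ∩ Dᶜ)ᶜ = 0 := by
        rw [hFc]
        exact measure_union_null hscS' (hDct.measure_zero _)
      have hscFct : μsc ((t + ·) ⁻¹' ((S ∩ ((t + ·) ⁻¹' S) ∩ ((-t + ·) ⁻¹' S))ᶜ ∩ Dᶜ)ᶜ) = 0 := by
        rw [hFc, preimage_union]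
        exact measure_union_null hsc_trt ((hctD t).measure_zero _)
      have hscFcnt : μsc ((-t + ·) ⁻¹' ((S ∩ ((t + ·) ⁻¹' S) ∩ ((-t + ·) ⁻¹' S))ᶜ ∩ Dᶜ)ᶜ) = 0 := by
        rw [hFc, preimage_union]
        exact measure_union_null hsc_trnt ((hctD (-t)).measure_zero _)
      have hWm : MeasurableSet (((S ∩ ((t + ·) ⁻¹' S) ∩ ((-t + ·) ⁻¹' S))ᶜ ∩ Dᶜ)
          ∩ ((-t + ·) ⁻¹' ((S ∩ ((t + ·) ⁻¹' S) ∩ ((-t + ·) ⁻¹' S))ᶜ ∩ Dᶜ))) :=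
        hFm.inter (hFm.preimage (measurable_const_add (-t)))
      have hWpre : (t + ·) ⁻¹' (((S ∩ ((t + ·) ⁻¹' S) ∩ ((-t + ·) ⁻¹' S))ᶜ ∩ Dᶜ)
            ∩ ((-t + ·) ⁻¹' ((S ∩ ((t + ·) ⁻¹' S) ∩ ((-t + ·) ⁻¹' S))ᶜ ∩ Dᶜ)))
          = ((t + ·) ⁻¹' ((S ∩ ((t + ·) ⁻¹' S) ∩ ((-t + ·) ⁻¹' S))ᶜ ∩ Dᶜ))
            ∩ ((S ∩ ((t + ·) ⁻¹' S) ∩ ((-t + ·) ⁻¹' S))ᶜ ∩ Dᶜ) := by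
        rw [preimage_inter, trtr]
      refine normDist_le_of_carrier μ μsc K t _ hM hbound _ hWm ?_ ?_
      · intro A
        refine (key_eq μsc μpp μac μ hd_sc A _ ?_ ?_ ?_).symm
        · rw [compl_inter, ← preimage_compl]
          exact measure_union_null hscFc hscFcnt
        · exact measure_mono_null (inter_subset_left.trans inter_subset_right) hD0
        · exact measure_mono_null (inter_subset_left.trans inter_subset_left) hacS'c
      · intro A
        rw [preimage_inter]
        refine (key_eq μsc μpp μac μ hd_sc _ _ ?_ ?_ ?_).symm
        · rw [hWpre, compl_inter, ← preimage_compl]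
          exact measure_union_null hscFct hscFc
        · rw [hWpre]
          exact measure_mono_null (inter_subset_right.trans inter_subset_right) hD0
        · rw [hWpre]
          exact measure_mono_null
            (inter_subset_left.trans (preimage_mono inter_subset_left)) (hac_tr t)
  constructor
  · intro ν hν ε hε
    obtain ⟨C, hC, h⟩ := hμap ε hε
    refine ⟨C, hC, fun g => ?_⟩
    obtain ⟨t, h1, h2⟩ := h g
    exact ⟨t, lt_of_le_of_lt (main t ν hν) h1, h2⟩
  · intro ε hε t ht ν hν
    exact lt_of_le_of_lt (main t ν hν) ht
end

section
/- Let G be a locally compact abelian group, let ω be a pure point measure whose support Γ is U-uniformly discrete for some open neighborhood U of 0 and satisfies ω({x}) = 1 for all x in a set Λ ⊆ Γ. Let γ be a measure with supp(γ) ⊆ Λ, and let f ∈ C_c(G) with supp(f * f̃) ⊆ U. Then the product measure (γ * f * f̃)·ω equals γ. -/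
open MeasureTheory

/-- Convolution of complex valued functions w.r.t. a (Haar) measure. -/
noncomputable def convC {G : Type*} [AddCommGroup G] [MeasurableSpace G]
    (haar : Measure G) (f g : G → ℂ) : G → ℂ :=
  fun x => ∫ t, f t * g (x - t) ∂haar

/-- The reflection-conjugate `f̃(x) = conj (f (-x))`. -/
noncomputable def tildeC {G : Type*} [AddCommGroup G] (f : G → ℂ) : G → ℂ :=
  fun x => starRingEnd ℂ (f (-x))

/-- Let `ω` be a pure point measure (encoded by its atom weights `w`) whose
support `Γ` is `U`-uniformly discrete (`U` an open neighbourhood of `0`) with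
`ω({x}) = 1` for all `x` in `Λ ⊆ Γ`.  Let `γ` be a pure point measure (atom weights
`γw`) supported inside `Λ`, and `f ∈ C_c(G)` with `supp(f * f̃) ⊆ U`.  Then the measure
`(γ * f * f̃)·ω` equals `(f*f̃)(0) · γ` atomwise:
`((γ * (f*f̃))·ω)({x}) = (f*f̃)(0) · γ({x})` for every `x`, where
`(γ * (f*f̃))(x) = Σ_{y} γ({y}) (f*f̃)(x − y)`. -/
theorem stmt_8 {G : Type*} [TopologicalSpace G] [AddCommGroup G] [IsTopologicalAddGroup G]
    [LocallyCompactSpace G] [T2Space G] [MeasurableSpace G] [BorelSpace G]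
    (haar : Measure G) [haar.IsAddHaarMeasure]
    (U : Set G) (hU : IsOpen U) (hU0 : (0 : G) ∈ U)
    (Γ Λ : Set G) (hΛΓ : Λ ⊆ Γ)
    (hud : ∀ x ∈ Γ, ((x + ·) '' U) ∩ Γ = {x})
    (w γw : G → ℂ)
    (hw0 : ∀ x ∉ Γ, w x = 0) (hw1 : ∀ x ∈ Λ, w x = 1)
    (hγ0 : ∀ x ∉ Λ, γw x = 0)
    (f : G → ℂ) (hf : Continuous f) (hfc : HasCompactSupport f)
    (hsupp : tsupport (convC haar f (tildeC f)) ⊆ U) :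
    ∀ x : G, (∑' y : G, γw y * convC haar f (tildeC f) (x - y)) * w x
      = convC haar f (tildeC f) 0 * γw x := by
  intro x
  set F := convC haar f (tildeC f) with hF
  by_cases hx : x ∈ Γ
  · have hsum : (∑' y : G, γw y * F (x - y)) = γw x * F (x - x) := by
      refine tsum_eq_single x ?_
      intro y hy
      by_contra h
      have hγ : γw y ≠ 0 := fun h0 => h (by rw [h0, zero_mul])
      have hFv : F (x - y) ≠ 0 := fun h0 => h (by rw [h0, mul_zero])
      have hyΛ : y ∈ Λ := by by_contra hc; exact hγ (hγ0 y hc)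
      have hxU : x - y ∈ U := hsupp (subset_tsupport _ hFv)
      have : x ∈ ((y + ·) '' U) ∩ Γ :=
        ⟨⟨x - y, hxU, by simp⟩, hx⟩
      rw [hud y (hΛΓ hyΛ)] at this
      exact hy this.symm
    rw [hsum, sub_self]
    by_cases hxΛ : x ∈ Λ
    · rw [hw1 x hxΛ, mul_one, mul_comm]
    · rw [hγ0 x hxΛ, zero_mul, zero_mul, mul_zero]
  · have hxΛ : x ∉ Λ := fun h => hx (hΛΓ h)
    rw [hw0 x hx, mul_zero, hγ0 x hxΛ, mul_zero]
end

section
/- Let ω be a pure point measure on a σ-compact locally compact abelian group G (so ω has countable support) and let ν be a finite measure on G with Lebesgue decomposition ν = ν_pp + ν_ac + ν_sc with respect to Haar measure. If ω is translation bounded, then ω * ν_pp is a pure point measure, ω * ν_ac is absolutely continuous with respect to Haar measure, and ω * ν_sc is a continuous (atomless) measure singular to Haar measure. -/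
open MeasureTheory

/-- Let `ω` be a translation bounded pure point measure on a σ-compact
locally compact abelian group `G`, and let `ν` be a finite measure with Lebesgue
decomposition `ν = νpp + νac + νsc` with respect to Haar measure.  Then `ω * νpp` is
pure point, `ω * νac` is absolutely continuous w.r.t. Haar measure, and `ω * νsc` is
continuous (atomless) and singular to Haar measure.  Here
`ω * ν = (ω.prod ν).map (+)`. -/
theorem stmt_9 {G : Type*} [TopologicalSpace G] [AddCommGroup G] [IsTopologicalAddGroup G]
    [LocallyCompactSpace G] [T2Space G] [SigmaCompactSpace G] [SecondCountableTopology G]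
    [MeasurableSpace G] [BorelSpace G]
    (haar : Measure G) [haar.IsAddHaarMeasure]
    (ω ν νpp νac νsc : Measure G)
    [IsFiniteMeasure ν] [IsFiniteMeasure νpp] [IsFiniteMeasure νac] [IsFiniteMeasure νsc]
    (hωpp : ∃ D : Set G, D.Countable ∧ ω Dᶜ = 0)
    (hωtb : ∀ C : Set G, IsCompact C → (⨆ t : G, ω ((t + ·) '' C)) < ⊤)
    (hdec : ν = νpp + νac + νsc)
    (hpp : ∃ D : Set G, D.Countable ∧ νpp Dᶜ = 0)
    (hac : νac ≪ haar)
    (hsc : νsc ⟂ₘ haar) (hsc' : ∀ x : G, νsc {x} = 0) :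
    (∃ D : Set G, D.Countable ∧ ((ω.prod νpp).map (fun p : G × G => p.1 + p.2)) Dᶜ = 0) ∧
    ((ω.prod νac).map (fun p : G × G => p.1 + p.2)) ≪ haar ∧
    (∀ x : G, ((ω.prod νsc).map (fun p : G × G => p.1 + p.2)) {x} = 0) ∧
    ((ω.prod νsc).map (fun p : G × G => p.1 + p.2)) ⟂ₘ haar := by
  obtain ⟨D₁, hD₁c, hD₁⟩ := hωpp
  obtain ⟨D₂, hD₂c, hD₂⟩ := hpp
  obtain ⟨u, hum, hu1, hu2⟩ := hsc
  refine ⟨⟨(fun p : G × G => p.1 + p.2) '' (D₁ ×ˢ D₂), (hD₁c.prod hD₂c).image _, ?_⟩,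
    ?_, ?_, ?_⟩
  · rw [Measure.map_apply measurable_add
      (((hD₁c.prod hD₂c).image _).measurableSet.compl)]
    refine le_antisymm ?_ zero_le
    calc (ω.prod νpp) ((fun p : G × G => p.1 + p.2) ⁻¹'
          ((fun p : G × G => p.1 + p.2) '' (D₁ ×ˢ D₂))ᶜ)
        ≤ (ω.prod νpp) (D₁ᶜ ×ˢ (Set.univ : Set G) ∪ (Set.univ : Set G) ×ˢ D₂ᶜ) := by
          refine measure_mono ?_
          intro p hp
          simp only [Set.mem_preimage, Set.mem_compl_iff] at hp
          by_cases h1 : p.1 ∈ D₁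
          · by_cases h2 : p.2 ∈ D₂
            · exact absurd (Set.mem_image_of_mem _ (Set.mk_mem_prod h1 h2)) hp
            · exact Or.inr ⟨Set.mem_univ _, h2⟩
          · exact Or.inl ⟨h1, Set.mem_univ _⟩
      _ ≤ (ω.prod νpp) (D₁ᶜ ×ˢ (Set.univ : Set G)) +
            (ω.prod νpp) ((Set.univ : Set G) ×ˢ D₂ᶜ) := measure_union_le _ _
      _ = 0 := by
          rw [Measure.prod_prod, Measure.prod_prod, hD₁, hD₂, zero_mul, mul_zero, add_zero]
  · refine Measure.AbsolutelyContinuous.mk fun S hSm hS => ?_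
    rw [Measure.map_apply measurable_add hSm, Measure.prod_apply (measurable_add hSm)]
    have h0 : ∀ x : G, νac (Prod.mk x ⁻¹' ((fun p : G × G => p.1 + p.2) ⁻¹' S)) = 0 := by
      intro x
      apply hac
      have he : Prod.mk x ⁻¹' ((fun p : G × G => p.1 + p.2) ⁻¹' S)
          = (fun y => x + y) ⁻¹' S := rfl
      rw [he, measure_preimage_add]
      exact hS
    simp [h0]
  · intro x
    rw [Measure.map_apply measurable_add (measurableSet_singleton x),
      Measure.prod_apply (measurable_add (measurableSet_singleton x))]
    have h0 : ∀ t : G, νsc (Prod.mk t ⁻¹' ((fun p : G × G => p.1 + p.2) ⁻¹' {x})) = 0 := by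
      intro t
      have he : Prod.mk t ⁻¹' ((fun p : G × G => p.1 + p.2) ⁻¹' {x}) = {x - t} := by
        ext y
        simp [eq_sub_iff_add_eq, add_comm, eq_comm]
      rw [he]
      exact hsc' _
    simp [h0]
  · refine ⟨⋂ t ∈ D₁, (fun x => x - t) ⁻¹' u, ?_, ?_, ?_⟩
    · exact MeasurableSet.biInter hD₁c fun t _ => (measurable_sub_const t) hum
    · rw [Measure.map_apply measurable_add
        (MeasurableSet.biInter hD₁c fun t _ => (measurable_sub_const t) hum),
        Measure.prod_apply (measurable_add
          (MeasurableSet.biInter hD₁c fun t _ => (measurable_sub_const t) hum))]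
      refine le_antisymm ?_ zero_le
      calc ∫⁻ t, νsc (Prod.mk t ⁻¹' ((fun p : G × G => p.1 + p.2) ⁻¹'
              ⋂ t ∈ D₁, (fun x => x - t) ⁻¹' u)) ∂ω
          ≤ ∫⁻ t, D₁ᶜ.indicator (fun _ => (⊤ : ENNReal)) t ∂ω := by
            refine lintegral_mono fun t => ?_
            by_cases ht : t ∈ D₁
            · have hz : νsc (Prod.mk t ⁻¹' ((fun p : G × G => p.1 + p.2) ⁻¹'
                  ⋂ t ∈ D₁, (fun x => x - t) ⁻¹' u)) = 0 := by
                refine measure_mono_null ?_ hu1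
                intro y hy
                simp only [Set.mem_preimage, Set.mem_iInter] at hy
                have := hy t ht
                simpa using this
              rw [hz]
              exact zero_le
            · simp [Set.indicator_of_mem (Set.mem_compl ht)]
        _ = 0 := by
            rw [lintegral_indicator_const hD₁c.measurableSet.compl, hD₁, mul_zero]
    · have hcompl : (⋂ t ∈ D₁, (fun x => x - t) ⁻¹' u)ᶜ = ⋃ t ∈ D₁, (fun x => x - t) ⁻¹' uᶜ := by
        simp [Set.compl_iInter, Set.preimage_compl]
      rw [hcompl]
      refine (measure_biUnion_null_iff hD₁c).2 fun t _ => ?_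
      have he : (fun x => x - t) ⁻¹' uᶜ = (fun x => (-t) + x) ⁻¹' uᶜ := by
        ext x; simp [sub_eq_neg_add]
      rw [he, measure_preimage_add]
      exact hu2
end

section
/- Let (G, ℝ^d × H₁, 𝓛) be a cut and project scheme, K ⊆ G compact, and W ⊆ H₁ compact. Then there exists a constant C = C(K, W) such that for all Schwartz functions φ on ℝ^d and all ψ ∈ C_c(H₁) with supp(ψ) ⊆ W, the weighted Dirac comb ω_{φ⊗ψ} = Σ_{(x, x*) ∈ 𝓛} φ(π₁(x*)) ψ(π₂(x*)) δ_x is a translation bounded measure and ‖ω_{φ⊗ψ}‖_K ≤ C · ‖ψ‖_∞ · ‖(1 + |s|^{2d}) φ(s)‖_∞. -/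
open MeasureTheory Topology Filter
open scoped ENNReal

lemma count_lemma {P : Type*} [TopologicalSpace P] [AddCommGroup P] [IsTopologicalAddGroup P]
    (L : AddSubgroup P) (hLdisc : DiscreteTopology L)
    {Q : Set P} (hQ : IsCompact Q) :
    ∃ N : ℕ, ∀ z : P, ∀ T : Finset L, (∀ ℓ ∈ T, (ℓ : P) ∈ (z + ·) '' Q) → T.card ≤ N := by
  -- isolated zero
  have h0 : IsOpen ({(0 : L)} : Set L) := isOpen_discrete _
  rw [isOpen_induced_iff] at h0
  obtain ⟨U, hUopen, hU⟩ := h0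
  have hU0 : (0 : P) ∈ U := by
    have : (0 : L) ∈ (Subtype.val ⁻¹' U : Set L) := by rw [hU]; rfl
    exact this
  have hUsep : ∀ ℓ : L, (ℓ : P) ∈ U → ℓ = 0 := by
    intro ℓ hℓ
    have : ℓ ∈ (Subtype.val ⁻¹' U : Set L) := hℓ
    rwa [hU, Set.mem_singleton_iff] at this
  -- V with V - V ⊆ U
  have hc : Continuous fun p : P × P => p.1 - p.2 := continuous_sub
  have hmem : (fun p : P × P => p.1 - p.2) ⁻¹' U ∈ 𝓝 ((0 : P), (0 : P)) := by
    apply hc.continuousAt.preimage_mem_nhds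
    simpa using hUopen.mem_nhds hU0
  rw [nhds_prod_eq, Filter.mem_prod_iff] at hmem
  obtain ⟨V₁, hV₁, V₂, hV₂, hV⟩ := hmem
  set V : Set P := V₁ ∩ V₂ with hVdef
  have hVmem : V ∈ 𝓝 (0 : P) := Filter.inter_mem hV₁ hV₂
  have hVsub : ∀ x ∈ V, ∀ y ∈ V, x - y ∈ U := fun x hx y hy =>
    hV (Set.mk_mem_prod hx.1 hy.2)
  -- cover Q by finitely many translates of V
  obtain ⟨F, hF⟩ := hQ.elim_nhds_subcover (fun q => (q + ·) '' V) (fun q _ => by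
    have : Filter.map (q + ·) (𝓝 (0:P)) = 𝓝 q := by
      simpa using (Homeomorph.addLeft q).map_nhds_eq 0
    rw [← this]
    exact Filter.image_mem_map hVmem)
  refine ⟨F.card, fun z T hT => ?_⟩
  -- map each ℓ ∈ T to some q ∈ F
  classical
  have hpick : ∀ ℓ ∈ T, ∃ q ∈ F, (ℓ : P) - z ∈ (q + ·) '' V := by
    intro ℓ hℓ
    obtain ⟨x, hxQ, hxz⟩ := hT ℓ hℓ
    have : (ℓ : P) - z ∈ Q := by
      have : (ℓ:P) - z = x := by simp at hxz; rw [← hxz]; abel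
      rwa [this]
    have := hF.2 this
    simp only [Set.mem_iUnion] at this
    obtain ⟨q, hq, hmem⟩ := this
    exact ⟨q, hq, hmem⟩
  choose f hf1 hf2 using hpick
  have hinj : ∀ ℓ₁ (h₁ : ℓ₁ ∈ T), ∀ ℓ₂ (h₂ : ℓ₂ ∈ T), f ℓ₁ h₁ = f ℓ₂ h₂ → ℓ₁ = ℓ₂ := by
    intro ℓ₁ h₁ ℓ₂ h₂ heq
    obtain ⟨v₁, hv₁, he₁⟩ := hf2 ℓ₁ h₁
    obtain ⟨v₂, hv₂, he₂⟩ := hf2 ℓ₂ h₂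
    rw [heq] at he₁
    have hd : (ℓ₁ : P) - (ℓ₂ : P) = v₁ - v₂ := by
      have e1 : (ℓ₁ : P) - z = f ℓ₂ h₂ + v₁ := he₁.symm
      have e2 : (ℓ₂ : P) - z = f ℓ₂ h₂ + v₂ := he₂.symm
      have := congrArg₂ (· - ·) e1 e2
      simpa [sub_sub_sub_cancel_right] using this
    have : ((ℓ₁ - ℓ₂ : L) : P) ∈ U := by
      push_cast
      rw [hd]
      exact hVsub v₁ hv₁ v₂ hv₂
    have := hUsep _ this
    exact sub_eq_zero.mp (by exact_mod_cast this)
  calc T.card = (T.attach.image (fun x => f x.1 x.2)).card := by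
        rw [Finset.card_image_of_injective]
        · simp
        · intro a b hab
          exact Subtype.ext (hinj a.1 a.2 b.1 b.2 hab)
      _ ≤ F.card := Finset.card_le_card (by
          intro q hq
          simp only [Finset.mem_image, Finset.mem_attach, true_and, Subtype.exists] at hq
          obtain ⟨a, ha, h2⟩ := hq
          obtain ⟨hmem, rfl⟩ := h2
          exact hf1 _ hmem)

lemma tsum_indicator_le {ι : Type*} (A : Set ι) (c : ℝ≥0∞) (N : ℕ)
    (hA : ∀ T : Finset ι, (∀ x ∈ T, x ∈ A) → T.card ≤ N) :
    ∑' x, A.indicator (fun _ => c) x ≤ N * c := by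
  classical
  rw [ENNReal.tsum_eq_iSup_sum]
  refine iSup_le fun T => ?_
  calc ∑ x ∈ T, A.indicator (fun _ => c) x
      = ∑ x ∈ T.filter (· ∈ A), c := by
        rw [Finset.sum_filter]
        exact Finset.sum_congr rfl fun x _ => by
          by_cases hx : x ∈ A <;> simp [Set.indicator_apply, hx]
    _ = (T.filter (· ∈ A)).card * c := by rw [Finset.sum_const, nsmul_eq_mul]
    _ ≤ N * c := by
        gcongr
        exact_mod_cast Nat.cast_le.mpr (hA _ fun x hx => (Finset.mem_filter.mp hx).2)

lemma tsum_pi_prod (d : ℕ) (w : ℤ → ℝ≥0∞) :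
    ∑' m : Fin d → ℤ, ∏ i, w (m i) = (∑' k : ℤ, w k) ^ d := by
  induction d with
  | zero =>
    simp only [Finset.univ_eq_empty, Finset.prod_empty, pow_zero]
    rw [tsum_eq_single default (fun b hb => absurd (Subsingleton.elim b default) hb)]
  | succ n ih =>
    rw [← Equiv.tsum_eq (Fin.consEquiv (fun _ : Fin (n+1) => ℤ)) (fun m => ∏ i, w (m i))]
    have : ∀ c : ℤ × (Fin n → ℤ), ∏ i : Fin (n+1), w ((Fin.consEquiv fun _ => ℤ) c i)
        = w c.1 * ∏ i : Fin n, w (c.2 i) := fun c => by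
      simp only [Fin.consEquiv_apply]
      rw [Fin.prod_univ_succ]
      simp
    simp only [this]
    rw [show ∑' (c : ℤ × (Fin n → ℤ)), w c.1 * ∏ i : Fin n, w (c.2 i)
      = ∑' (a : ℤ), ∑' (b : Fin n → ℤ), w a * ∏ i : Fin n, w (b i) from ENNReal.tsum_prod (f := fun (a : ℤ) (b : Fin n → ℤ) => w a * ∏ i : Fin n, w (b i))]
    simp only [ENNReal.tsum_mul_left, ih, ← ENNReal.tsum_mul_right]
    rw [pow_succ, mul_comm]
    exact ENNReal.tsum_mul_right

lemma s0_ne_top : (∑' k : ℤ, ENNReal.ofReal (1 / (1 + (k:ℝ)^2))) ≠ ⊤ := by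
  have hsum : Summable (fun k : ℤ => 1 / (1 + (k:ℝ)^2)) := by
    have h1 : Summable (fun k : ℤ => 1 / (k:ℝ)^2 + Set.indicator {0} (fun _ => (1:ℝ)) k) := by
      apply Summable.add
      · exact (Real.summable_one_div_int_pow).mpr one_lt_two
      · exact summable_of_finite_support (by
          apply Set.Finite.subset (Set.finite_singleton (0:ℤ))
          intro k hk
          simp only [Function.mem_support] at hk
          by_contra h
          exact hk (Set.indicator_of_notMem h _))
    apply Summable.of_nonneg_of_le (fun k => by positivity) _ h1
    intro k
    by_cases hk : k = 0
    · subst hk; simp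
    · rw [Set.indicator_of_notMem (by simpa using hk)]
      have : (0:ℝ) < (k:ℝ)^2 := by positivity
      rw [add_zero]
      gcongr
      · linarith
  rw [← ENNReal.ofReal_tsum_of_nonneg (fun k => by positivity) hsum]
  exact ENNReal.ofReal_ne_top

-- real inequality: prod (1+⌊x i⌋²) ≤ 9^d (1+‖x‖^{2d})

lemma prod_floor_le {d : ℕ} (x : Fin d → ℝ) :
    ∏ i, (1 + ((⌊x i⌋ : ℝ))^2) ≤ 9^d * (1 + ‖x‖^(2*d)) := by
  have hnorm : 0 ≤ ‖x‖ := norm_nonneg x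
  have h1 : ∀ i, 1 + ((⌊x i⌋:ℝ))^2 ≤ (‖x‖ + 2)^2 := by
    intro i
    have hf : |(⌊x i⌋:ℝ)| ≤ |x i| + 1 := by
      rw [abs_le]
      constructor
      · have := Int.sub_one_lt_floor (x i); have := neg_abs_le (x i); linarith
      · have := Int.lt_floor_add_one (x i)
        have := Int.floor_le (x i)
        have := le_abs_self (x i)
        linarith
    have hx : |x i| ≤ ‖x‖ := by
      have := norm_le_pi_norm x i
      simpa using this
    have : ((⌊x i⌋:ℝ))^2 ≤ (‖x‖+1)^2 := by
      rw [← sq_abs]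
      apply pow_le_pow_left₀ (abs_nonneg _)
      linarith
    nlinarith
  calc ∏ i, (1 + ((⌊x i⌋:ℝ))^2) ≤ ∏ _i : Fin d, (‖x‖+2)^2 := by
        apply Finset.prod_le_prod (fun i _ => by positivity) (fun i _ => h1 i)
    _ = ((‖x‖+2)^2)^d := by rw [Finset.prod_const, Finset.card_univ, Fintype.card_fin]
    _ ≤ (9 * max 1 (‖x‖^2))^d := by
        apply pow_le_pow_left₀ (by positivity)
        rcases le_total ‖x‖ 1 with h | h
        · have : max 1 (‖x‖^2) = 1 := max_eq_left (by nlinarith)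
          rw [this]; nlinarith
        · have h2 : max 1 (‖x‖^2) = ‖x‖^2 := max_eq_right (by nlinarith)
          rw [h2]; nlinarith
    _ = 9^d * (max 1 (‖x‖^2))^d := mul_pow _ _ _
    _ ≤ 9^d * (1 + ‖x‖^(2*d)) := by
        gcongr
        rcases le_total ‖x‖ 1 with h | h
        · have : max 1 (‖x‖^2) = 1 := max_eq_left (by nlinarith)
          rw [this, one_pow]; nlinarith [pow_nonneg hnorm (2*d)]
        · have h2 : max 1 (‖x‖^2) = ‖x‖^2 := max_eq_right (by nlinarith)
          rw [h2, ← pow_mul]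
          nlinarith [pow_nonneg hnorm (2*d)]

/-- Let `(G, ℝ^d × H₁, 𝓛)` be a cut and project scheme (`𝓛` a lattice in
`G × ℝ^d × H₁`, i.e. a discrete cocompact subgroup, projecting injectively to `G` and
densely to `ℝ^d × H₁`), `K ⊆ G` compact and `W ⊆ H₁` compact.  Then there is a constant
`C = C(K, W) > 0` such that for every Schwartz function `φ` on `ℝ^d` and every
`ψ ∈ C_c(H₁)` with `supp ψ ⊆ W`, the weighted Dirac comb
`ω_{φ⊗ψ} = Σ_{(x,x*)∈𝓛} φ(π₁ x*) ψ(π₂ x*) δ_x` (here represented through its total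
variation `Σ |φ(π₁ x*) ψ(π₂ x*)| δ_x`) is translation bounded and
`‖ω_{φ⊗ψ}‖_K ≤ C ‖ψ‖_∞ ‖(1+|s|^{2d}) φ(s)‖_∞`. -/
theorem stmt_10 {G H₁ : Type*}
    [TopologicalSpace G] [AddCommGroup G] [IsTopologicalAddGroup G]
    [LocallyCompactSpace G] [T2Space G] [MeasurableSpace G] [BorelSpace G]
    [TopologicalSpace H₁] [AddCommGroup H₁] [IsTopologicalAddGroup H₁]
    [LocallyCompactSpace H₁] [T2Space H₁]
    (d : ℕ)
    (L : AddSubgroup (G × (Fin d → ℝ) × H₁))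
    (hLdisc : DiscreteTopology L)
    (hLcocpt : ∃ C : Set (G × (Fin d → ℝ) × H₁), IsCompact C ∧
      ∀ z : G × (Fin d → ℝ) × H₁, ∃ ℓ ∈ L, z ∈ (ℓ + ·) '' C)
    (hLinj : ∀ ℓ₁ ℓ₂ : L, (ℓ₁ : G × (Fin d → ℝ) × H₁).1 = (ℓ₂ : G × (Fin d → ℝ) × H₁).1 →
      ℓ₁ = ℓ₂)
    (hLdense : DenseRange (fun ℓ : L => (ℓ : G × (Fin d → ℝ) × H₁).2))
    (K : Set G) (hK : IsCompact K) (W : Set H₁) (hW : IsCompact W) :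
    ∃ C : ℝ, 0 < C ∧
      ∀ (φ : SchwartzMap (Fin d → ℝ) ℝ) (ψ : H₁ → ℝ),
        Continuous ψ → tsupport ψ ⊆ W →
        (∀ K' : Set G, IsCompact K' →
          (⨆ t : G, (Measure.sum (fun ℓ : L =>
            (ENNReal.ofReal |φ ((ℓ : G × (Fin d → ℝ) × H₁).2.1)
              * ψ ((ℓ : G × (Fin d → ℝ) × H₁).2.2)|) •
            Measure.dirac ((ℓ : G × (Fin d → ℝ) × H₁).1))) ((t + ·) '' K')) < ⊤) ∧
        (⨆ t : G, (Measure.sum (fun ℓ : L =>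
            (ENNReal.ofReal |φ ((ℓ : G × (Fin d → ℝ) × H₁).2.1)
              * ψ ((ℓ : G × (Fin d → ℝ) × H₁).2.2)|) •
            Measure.dirac ((ℓ : G × (Fin d → ℝ) × H₁).1))) ((t + ·) '' K)) ≤
          ENNReal.ofReal (C * (⨆ y : H₁, |ψ y|)
            * (⨆ s : Fin d → ℝ, (1 + ‖s‖ ^ (2 * d)) * |φ s|)) := by
  classical
  set s₀ : ℝ≥0∞ := ∑' k : ℤ, ENNReal.ofReal (1 / (1 + (k:ℝ)^2)) with hs₀def
  -- key lemma
  have key : ∀ K₀ : Set G, IsCompact K₀ → ∃ N : ℕ,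
      ∀ (t : G) (φ : SchwartzMap (Fin d → ℝ) ℝ) (ψ : H₁ → ℝ),
      Continuous ψ → tsupport ψ ⊆ W →
      (Measure.sum (fun ℓ : L =>
            (ENNReal.ofReal |φ ((ℓ : G × (Fin d → ℝ) × H₁).2.1)
              * ψ ((ℓ : G × (Fin d → ℝ) × H₁).2.2)|) •
            Measure.dirac ((ℓ : G × (Fin d → ℝ) × H₁).1))) ((t + ·) '' K₀) ≤
        (N : ℝ≥0∞) * ENNReal.ofReal (⨆ y : H₁, |ψ y|)
          * ENNReal.ofReal (⨆ s : Fin d → ℝ, (1 + ‖s‖ ^ (2 * d)) * |φ s|)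
          * 9^d * s₀^d := by
    intro K₀ hK₀
    obtain ⟨N, hN⟩ := count_lemma L hLdisc
      (hK₀.prod ((isCompact_Icc : IsCompact (Set.Icc (0 : Fin d → ℝ) 1)).prod hW))
    refine ⟨N, fun t φ ψ hψc hψsupp => ?_⟩
    set Mφ : ℝ := ⨆ s : Fin d → ℝ, (1 + ‖s‖ ^ (2 * d)) * |φ s| with hMφdef
    set Mψ : ℝ := ⨆ y : H₁, |ψ y| with hMψdef
    set s : Set G := (t + ·) '' K₀ with hsdef
    have hsm : MeasurableSet s :=
      ((hK₀.image (continuous_const.add continuous_id)).isClosed).measurableSet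
    -- bounds for φ
    have hbφ : BddAbove (Set.range fun x : Fin d → ℝ => (1 + ‖x‖ ^ (2 * d)) * |φ x|) := by
      obtain ⟨C₀, -, hC₀⟩ := φ.decay 0 0
      obtain ⟨C₁, -, hC₁⟩ := φ.decay (2*d) 0
      refine ⟨C₀ + C₁, fun v hv => ?_⟩
      obtain ⟨x, rfl⟩ := hv
      have h0 := hC₀ x
      have h1 := hC₁ x
      rw [norm_iteratedFDeriv_zero] at h0 h1
      simp only [pow_zero, one_mul] at h0
      have : ‖φ x‖ = |φ x| := rfl
      rw [this] at h0 h1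
      show (1 + ‖x‖ ^ (2 * d)) * |φ x| ≤ C₀ + C₁
      nlinarith [abs_nonneg (φ x), pow_nonneg (norm_nonneg x) (2*d)]
    have hφ_le : ∀ x, (1 + ‖x‖ ^ (2 * d)) * |φ x| ≤ Mφ := fun x => le_ciSup hbφ x
    have hMφ0 : 0 ≤ Mφ := le_trans (by positivity) (hφ_le 0)
    -- bounds for ψ
    have hψcs : HasCompactSupport ψ :=
      IsCompact.of_isClosed_subset hW (isClosed_tsupport ψ) hψsupp
    have hbψ : BddAbove (Set.range fun y : H₁ => |ψ y|) := by
      obtain ⟨C₂, hC₂⟩ := hψcs.exists_bound_of_continuous hψc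
      exact ⟨C₂, fun v ⟨y, hy⟩ => hy ▸ hC₂ y⟩
    have hψ_le : ∀ y, |ψ y| ≤ Mψ := fun y => le_ciSup hbψ y
    have hMψ0 : 0 ≤ Mψ := le_trans (abs_nonneg _) (hψ_le 0)
    -- abbreviations
    set a : L → G := fun ℓ => (ℓ : G × (Fin d → ℝ) × H₁).1 with hadef
    set b : L → (Fin d → ℝ) := fun ℓ => (ℓ : G × (Fin d → ℝ) × H₁).2.1 with hbdef
    set c : L → H₁ := fun ℓ => (ℓ : G × (Fin d → ℝ) × H₁).2.2 with hcdef
    set F : (Fin d → ℤ) → ℝ≥0∞ := fun m => ∏ i, ENNReal.ofReal (1/(1+((m i:ℝ))^2)) with hFdef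
    set A : (Fin d → ℤ) → Set L := fun m =>
      {ℓ : L | a ℓ ∈ s ∧ (fun i => ⌊b ℓ i⌋) = m ∧ c ℓ ∈ W} with hAdef
    rw [Measure.sum_apply _ hsm]
    simp only [Measure.smul_apply, smul_eq_mul, Measure.dirac_apply' _ hsm]
    -- step 1: pointwise bound
    have step1 : ∀ ℓ : L, ENNReal.ofReal |φ (b ℓ) * ψ (c ℓ)| * s.indicator 1 (a ℓ)
        ≤ ∑' m : Fin d → ℤ, (A m).indicator
            (fun _ => ENNReal.ofReal Mψ * ENNReal.ofReal Mφ * 9^d * F m) ℓ := by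
      intro ℓ
      by_cases ha : a ℓ ∈ s
      swap
      · rw [Set.indicator_of_notMem ha, mul_zero]; exact zero_le
      by_cases hc : c ℓ ∈ W
      swap
      · have : ψ (c ℓ) = 0 := image_eq_zero_of_notMem_tsupport (fun h => hc (hψsupp h))
        rw [this, mul_zero, abs_zero, ENNReal.ofReal_zero, zero_mul]
        exact zero_le
      rw [Set.indicator_of_mem ha, Pi.one_apply, mul_one]
      refine le_trans ?_ (ENNReal.le_tsum (fun i => ⌊b ℓ i⌋))
      rw [Set.indicator_of_mem (show ℓ ∈ A (fun i => ⌊b ℓ i⌋) from ⟨ha, rfl, hc⟩)]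
      -- real-number estimate
      have hx := b ℓ
      set x : Fin d → ℝ := b ℓ
      have hR : (0:ℝ) < 1 + ‖x‖^(2*d) := by positivity
      have hP : (0:ℝ) < ∏ i, (1 + ((⌊x i⌋:ℝ))^2) :=
        Finset.prod_pos fun i _ => by positivity
      have hφx : |φ x| ≤ Mφ * (1/(1 + ‖x‖^(2*d))) := by
        rw [mul_one_div, le_div_iff₀ hR]
        calc |φ x| * (1 + ‖x‖^(2*d)) = (1 + ‖x‖^(2*d)) * |φ x| := mul_comm _ _
          _ ≤ Mφ := hφ_le x
      have hrecip : 1/(1 + ‖x‖^(2*d)) ≤ 9^d * ∏ i, (1/(1 + ((⌊x i⌋:ℝ))^2)) := by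
        have : ∏ i, (1/(1 + ((⌊x i⌋:ℝ))^2)) = 1 / ∏ i, (1 + ((⌊x i⌋:ℝ))^2) := by
          rw [one_div, ← Finset.prod_inv_distrib]
          simp [one_div]
        rw [this, mul_one_div, div_le_div_iff₀ hR (by positivity)]
        calc 1 * ∏ i, (1 + ((⌊x i⌋:ℝ))^2) = ∏ i, (1 + ((⌊x i⌋:ℝ))^2) := one_mul _
          _ ≤ 9^d * (1 + ‖x‖^(2*d)) := prod_floor_le x
      have hreal : |φ x * ψ (c ℓ)| ≤ Mψ * Mφ * (9^d * ∏ i, (1/(1 + ((⌊x i⌋:ℝ))^2))) := by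
        rw [abs_mul]
        calc |φ x| * |ψ (c ℓ)|
            ≤ (Mφ * (1/(1 + ‖x‖^(2*d)))) * Mψ :=
              mul_le_mul hφx (hψ_le _) (abs_nonneg _) (by positivity)
          _ ≤ (Mφ * (9^d * ∏ i, (1/(1 + ((⌊x i⌋:ℝ))^2)))) * Mψ := by
              gcongr
          _ = Mψ * Mφ * (9^d * ∏ i, (1/(1 + ((⌊x i⌋:ℝ))^2))) := by ring
      calc ENNReal.ofReal |φ x * ψ (c ℓ)|
          ≤ ENNReal.ofReal (Mψ * Mφ * (9^d * ∏ i, (1/(1 + ((⌊x i⌋:ℝ))^2)))) :=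
            ENNReal.ofReal_le_ofReal hreal
        _ = ENNReal.ofReal Mψ * ENNReal.ofReal Mφ * 9^d * F (fun i => ⌊x i⌋) := by
            rw [ENNReal.ofReal_mul (by positivity), ENNReal.ofReal_mul (by positivity),
              ENNReal.ofReal_mul (by positivity)]
            rw [ENNReal.ofReal_prod_of_nonneg (fun i _ => by positivity)]
            have h9 : ENNReal.ofReal ((9:ℝ)^d) = (9:ℝ≥0∞)^d := by
              rw [ENNReal.ofReal_pow (by norm_num)]
              norm_num
            rw [h9, hFdef]
            ring
    -- step 2: sum up
    calc ∑' ℓ : L, ENNReal.ofReal |φ (b ℓ) * ψ (c ℓ)| * s.indicator 1 (a ℓ)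
        ≤ ∑' (ℓ : L) (m : Fin d → ℤ), (A m).indicator
            (fun _ => ENNReal.ofReal Mψ * ENNReal.ofReal Mφ * 9^d * F m) ℓ :=
          ENNReal.tsum_le_tsum step1
      _ = ∑' (m : Fin d → ℤ) (ℓ : L), (A m).indicator
            (fun _ => ENNReal.ofReal Mψ * ENNReal.ofReal Mφ * 9^d * F m) ℓ :=
          ENNReal.tsum_comm
      _ ≤ ∑' (m : Fin d → ℤ), (N : ℝ≥0∞) *
            (ENNReal.ofReal Mψ * ENNReal.ofReal Mφ * 9^d * F m) := by
          refine ENNReal.tsum_le_tsum fun m => ?_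
          set z : G × (Fin d → ℝ) × H₁ := (t, (fun i => (m i : ℝ)), 0) with hzdef
          refine tsum_indicator_le _ _ N fun T hT => hN z T ?_
          intro ℓ hℓ
          obtain ⟨haℓ, hbℓ, hcℓ⟩ := hT ℓ hℓ
          refine ⟨(ℓ : G × (Fin d → ℝ) × H₁) - z, ?_,
            show z + ((ℓ : G × (Fin d → ℝ) × H₁) - z) = ℓ by abel⟩
          rw [hzdef]
          obtain ⟨k, hkK, hk⟩ := haℓ
          refine ⟨?_, ?_, ?_⟩
          · show (ℓ : G × (Fin d → ℝ) × H₁).1 - t ∈ K₀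
            have : a ℓ = t + k := hk.symm
            rw [show (ℓ : G × (Fin d → ℝ) × H₁).1 = a ℓ from rfl, this]
            simpa using hkK
          · show b ℓ - (fun i => (m i : ℝ)) ∈ Set.Icc (0 : Fin d → ℝ) 1
            rw [Set.mem_Icc]
            constructor <;> rw [Pi.le_def] <;> intro i
            · have : ⌊b ℓ i⌋ = m i := congrFun hbℓ i
              have := Int.floor_le (b ℓ i)
              rw [‹⌊b ℓ i⌋ = m i›] at this
              simpa using by linarith [this]
            · have heq : ⌊b ℓ i⌋ = m i := congrFun hbℓ i
              have hlt := Int.lt_floor_add_one (b ℓ i)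
              rw [heq] at hlt
              have : b ℓ i - (m i : ℝ) ≤ 1 := by push_cast at hlt ⊢; linarith
              simpa using this
          · show c ℓ - 0 ∈ W
            simpa using hcℓ
      _ = (N : ℝ≥0∞) * ENNReal.ofReal Mψ * ENNReal.ofReal Mφ * 9^d * s₀^d := by
          rw [ENNReal.tsum_mul_left, ENNReal.tsum_mul_left]
          have hFs : ∑' (m : Fin d → ℤ), F m = s₀^d := by
            simp only [hFdef]
            exact tsum_pi_prod d (fun k => ENNReal.ofReal (1/(1+(k:ℝ)^2)))
          rw [hFs]
          ring
  -- assemble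
  obtain ⟨N, hNK⟩ := key K hK
  refine ⟨((N:ℝ)+1) * 9^d * ((s₀^d).toReal + 1), by positivity, fun φ ψ hψc hψsupp => ?_⟩
  have hfin : ∀ (N' : ℕ), (N' : ℝ≥0∞) * ENNReal.ofReal (⨆ y : H₁, |ψ y|)
      * ENNReal.ofReal (⨆ s : Fin d → ℝ, (1 + ‖s‖ ^ (2 * d)) * |φ s|) * 9^d * s₀^d < ⊤ := by
    intro N'
    have h1 : s₀^d ≠ ⊤ := ENNReal.pow_ne_top s0_ne_top
    have : (9:ℝ≥0∞)^d ≠ ⊤ := ENNReal.pow_ne_top (by norm_num)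
    exact ENNReal.mul_lt_top
      (ENNReal.mul_lt_top
        (ENNReal.mul_lt_top
          (ENNReal.mul_lt_top (ENNReal.natCast_lt_top N') ENNReal.ofReal_lt_top)
          ENNReal.ofReal_lt_top)
        this.lt_top)
      h1.lt_top
  constructor
  · intro K' hK'
    obtain ⟨N', hN'⟩ := key K' hK'
    exact lt_of_le_of_lt (iSup_le fun t => hN' t φ ψ hψc hψsupp) (hfin N')
  · refine iSup_le fun t => le_trans (hNK t φ ψ hψc hψsupp) ?_
    set Mφ : ℝ := ⨆ s : Fin d → ℝ, (1 + ‖s‖ ^ (2 * d)) * |φ s| with hMφdef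
    set Mψ : ℝ := ⨆ y : H₁, |ψ y| with hMψdef
    have hMψ0 : 0 ≤ Mψ := Real.iSup_nonneg fun y => abs_nonneg _
    have hMφ0 : 0 ≤ Mφ := Real.iSup_nonneg fun x => by positivity
    have hC0 : (0:ℝ) ≤ ((N:ℝ)+1) * 9^d * ((s₀^d).toReal + 1) := by positivity
    rw [ENNReal.ofReal_mul (mul_nonneg hC0 hMψ0), ENNReal.ofReal_mul hC0]
    have hmain : (N : ℝ≥0∞) * 9^d * s₀^d
        ≤ ENNReal.ofReal (((N:ℝ)+1) * 9^d * ((s₀^d).toReal + 1)) := by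
      rw [ENNReal.ofReal_mul (by positivity), ENNReal.ofReal_mul (by positivity)]
      have e1 : (N : ℝ≥0∞) ≤ ENNReal.ofReal ((N:ℝ)+1) := by
        rw [← ENNReal.ofReal_natCast N]
        exact ENNReal.ofReal_le_ofReal (by linarith)
      have e2 : (9:ℝ≥0∞)^d = ENNReal.ofReal ((9:ℝ)^d) := by
        rw [ENNReal.ofReal_pow (by norm_num)]; norm_num
      have e3 : s₀^d ≤ ENNReal.ofReal ((s₀^d).toReal + 1) := by
        have h1 : s₀^d ≠ ⊤ := ENNReal.pow_ne_top s0_ne_top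
        calc s₀^d = ENNReal.ofReal ((s₀^d).toReal) := (ENNReal.ofReal_toReal h1).symm
          _ ≤ _ := ENNReal.ofReal_le_ofReal (by linarith [ENNReal.toReal_nonneg (a := s₀^d)])
      calc (N : ℝ≥0∞) * 9^d * s₀^d
          ≤ ENNReal.ofReal ((N:ℝ)+1) * ENNReal.ofReal ((9:ℝ)^d)
            * ENNReal.ofReal ((s₀^d).toReal + 1) := by
            rw [← e2]; exact mul_le_mul' (mul_le_mul' e1 le_rfl) e3
        _ = _ := rfl
    calc (N : ℝ≥0∞) * ENNReal.ofReal Mψ * ENNReal.ofReal Mφ * 9^d * s₀^d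
        = ((N : ℝ≥0∞) * 9^d * s₀^d) * ENNReal.ofReal Mψ * ENNReal.ofReal Mφ := by ring
      _ ≤ ENNReal.ofReal (((N:ℝ)+1) * 9^d * ((s₀^d).toReal + 1))
            * ENNReal.ofReal Mψ * ENNReal.ofReal Mφ := by
          exact mul_le_mul' (mul_le_mul' hmain le_rfl) le_rfl
end

section
/- Let G be a σ-compact locally compact abelian group, ω a translation bounded pure point measure on G, and ν a finite measure on G. Then the convolution ω * ν exists as a translation bounded measure, and its Lebesgue decomposition satisfies (ω*ν)_pp = ω*ν_pp, (ω*ν)_ac = ω*ν_ac, (ω*ν)_sc = ω*ν_sc, where ν = ν_pp + ν_ac + ν_sc is the Lebesgue decomposition of ν with respect to Haar measure. -/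
open MeasureTheory

/-- Convolution of measures: `(ω * ν)(A) = ∫∫ 1_A(s+t) dν(s) dω(t)`. -/
noncomputable def mconv {G : Type*} [AddCommGroup G] [MeasurableSpace G]
    (ω ν : Measure G) : Measure G :=
  (ω.prod ν).map (fun p : G × G => p.1 + p.2)

open Set Pointwise

section aux
set_option linter.unusedSectionVars false
variable {G : Type*} [TopologicalSpace G] [AddCommGroup G] [IsTopologicalAddGroup G]
    [LocallyCompactSpace G] [T2Space G] [SigmaCompactSpace G] [SecondCountableTopology G]
    [MeasurableSpace G] [BorelSpace G]

lemma mconv_apply (ω μ : Measure G) [SFinite μ] {S : Set G} (hS : MeasurableSet S) :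
    mconv ω μ S = ∫⁻ t, μ ((t + ·) ⁻¹' S) ∂ω := by
  rw [mconv, Measure.map_apply measurable_add hS, Measure.prod_apply (measurable_add hS)]
  rfl

lemma mconv_apply_symm (ω μ : Measure G) [SFinite ω] [SFinite μ] {S : Set G}
    (hS : MeasurableSet S) :
    mconv ω μ S = ∫⁻ s, ω ((· + s) ⁻¹' S) ∂μ := by
  rw [mconv, Measure.map_apply measurable_add hS,
    Measure.prod_apply_symm (measurable_add hS)]
  rfl

end aux

/-- Let `G` be a σ-compact locally compact abelian group, `ω` a translation
bounded pure point measure and `ν` a finite measure with Lebesgue decomposition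
`ν = νpp + νac + νsc` w.r.t. Haar measure.  Then `ω * ν` is a translation bounded
measure and its Lebesgue decomposition is `(ω*ν)_pp = ω*νpp`, `(ω*ν)_ac = ω*νac`,
`(ω*ν)_sc = ω*νsc`: that is, `ω*ν = ω*νpp + ω*νac + ω*νsc` where `ω*νpp` is pure
point, `ω*νac ≪ haar`, and `ω*νsc` is atomless and singular to Haar. -/
theorem stmt_14 {G : Type*} [TopologicalSpace G] [AddCommGroup G] [IsTopologicalAddGroup G]
    [LocallyCompactSpace G] [T2Space G] [SigmaCompactSpace G] [SecondCountableTopology G]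
    [MeasurableSpace G] [BorelSpace G]
    (haar : Measure G) [haar.IsAddHaarMeasure]
    (ω ν νpp νac νsc : Measure G)
    [IsFiniteMeasure ν] [IsFiniteMeasure νpp] [IsFiniteMeasure νac] [IsFiniteMeasure νsc]
    (hωpp : ∃ D : Set G, D.Countable ∧ ω Dᶜ = 0)
    (hωtb : ∀ C : Set G, IsCompact C → (⨆ t : G, ω ((t + ·) '' C)) < ⊤)
    (hdec : ν = νpp + νac + νsc)
    (hpp : ∃ D : Set G, D.Countable ∧ νpp Dᶜ = 0)
    (hac : νac ≪ haar)
    (hsc : νsc ⟂ₘ haar) (hsc' : ∀ x : G, νsc {x} = 0) :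
    (∀ C : Set G, IsCompact C → (⨆ t : G, mconv ω ν ((t + ·) '' C)) < ⊤) ∧
    mconv ω ν = mconv ω νpp + mconv ω νac + mconv ω νsc ∧
    (∃ D : Set G, D.Countable ∧ mconv ω νpp Dᶜ = 0) ∧
    mconv ω νac ≪ haar ∧
    (∀ x : G, mconv ω νsc {x} = 0) ∧
    mconv ω νsc ⟂ₘ haar := by
  -- ω is finite on compacts, hence σ-finite
  have hωK : ∀ K : Set G, IsCompact K → ω K < ⊤ := by
    intro K hK
    refine lt_of_le_of_lt ?_ (hωtb K hK)
    have h0 : ω K = ω ((0 + ·) '' K) := by simp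
    rw [h0]
    exact le_iSup (fun t => ω ((t + ·) '' K)) 0
  haveI : IsFiniteMeasureOnCompacts ω := ⟨hωK⟩
  haveI : SigmaFinite ω := inferInstance
  -- translation images are compact and measurable
  have himg : ∀ (t : G) (C : Set G), IsCompact C → MeasurableSet ((t + ·) '' C) := by
    intro t C hC
    exact (hC.image (continuous_add_left t)).isClosed.measurableSet
  constructor
  · -- translation boundedness
    intro C hC
    refine lt_of_le_of_lt (iSup_le fun t => ?_)
      (ENNReal.mul_lt_top (hωtb C hC) (measure_lt_top ν univ))
    rw [mconv_apply_symm ω ν (himg t C hC)]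
    calc ∫⁻ s, ω ((· + s) ⁻¹' ((t + ·) '' C)) ∂ν
        ≤ ∫⁻ _, (⨆ u : G, ω ((u + ·) '' C)) ∂ν := by
          refine lintegral_mono fun s => ?_
          have : ((· + s) ⁻¹' ((t + ·) '' C)) = ((t - s) + ·) '' C := by
            ext x
            simp only [mem_preimage, mem_image]
            constructor
            · rintro ⟨c, hc, hcx⟩
              exact ⟨c, hc, by rw [sub_add_eq_add_sub, hcx]; abel⟩
            · rintro ⟨c, hc, hcx⟩
              exact ⟨c, hc, by rw [← hcx]; abel⟩
          rw [this]
          exact le_iSup (fun u => ω ((u + ·) '' C)) (t - s)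
      _ = (⨆ u : G, ω ((u + ·) '' C)) * ν univ := by rw [lintegral_const]
  refine ⟨?_, ?_, ?_, ?_, ?_⟩
  · -- additivity
    rw [hdec, mconv, mconv, mconv, mconv, Measure.prod_add, Measure.prod_add,
      Measure.map_add _ _ measurable_add, Measure.map_add _ _ measurable_add]
  · -- pure point
    obtain ⟨Dω, hDωc, hDω0⟩ := hωpp
    obtain ⟨Dν, hDνc, hDν0⟩ := hpp
    have hDc : (Dω + Dν).Countable := by
      rw [← Set.image2_add]; exact hDωc.image2 hDνc _
    refine ⟨Dω + Dν, hDc, ?_⟩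
    have hD : MeasurableSet (Dω + Dν) := hDc.measurableSet
    rw [mconv, Measure.map_apply measurable_add hD.compl]
    have hsub : (fun p : G × G => p.1 + p.2) ⁻¹' (Dω + Dν)ᶜ ⊆
        (Dωᶜ ×ˢ univ) ∪ (univ ×ˢ Dνᶜ) := by
      rintro ⟨a, b⟩ hab
      by_contra h
      simp only [mem_union, mem_prod, mem_compl_iff, mem_univ, and_true, true_and,
        not_or, not_not] at h
      exact hab (Set.add_mem_add h.1 h.2)
    refine measure_mono_null hsub (le_antisymm ?_ zero_le)
    refine le_trans (measure_union_le _ _) ?_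
    rw [Measure.prod_prod, Measure.prod_prod, hDω0, hDν0, zero_mul, mul_zero, add_zero]
  · -- absolutely continuous
    refine Measure.AbsolutelyContinuous.mk fun S hS hS0 => ?_
    rw [mconv_apply ω νac hS]
    have : ∀ t : G, νac ((t + ·) ⁻¹' S) = 0 := by
      intro t
      apply hac
      rw [show ((t + ·) ⁻¹' S) = ((fun x => t + x) ⁻¹' S) from rfl,
        measure_preimage_add haar t S]
      exact hS0
    exact (lintegral_congr this).trans lintegral_zero
  · -- atomless
    intro x
    rw [mconv_apply ω νsc (measurableSet_singleton x)]
    have : ∀ t : G, νsc ((t + ·) ⁻¹' {x}) = 0 := by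
      intro t
      have : ((t + ·) ⁻¹' {x} : Set G) = {x - t} := by
        ext s
        simp only [mem_preimage, mem_singleton_iff]
        constructor
        · intro h; rw [← h]; abel
        · intro h; rw [h]; abel
      rw [this]
      exact hsc' _
    exact (lintegral_congr this).trans lintegral_zero
  · -- singular
    obtain ⟨N, hNm, hN0, hNc0⟩ := hsc
    obtain ⟨Dω, hDωc, hDω0⟩ := hωpp
    set T : Set G := ⋂ d ∈ Dω, (fun x => d + x) '' N with hT
    have hTm : MeasurableSet T := by
      refine MeasurableSet.biInter hDωc fun d _ => ?_
      have : (fun x => d + x) '' N = (fun x => -d + x) ⁻¹' N := by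
        ext x
        simp only [mem_image, mem_preimage]
        constructor
        · rintro ⟨n, hn, rfl⟩; simpa
        · intro h; exact ⟨-d + x, h, by abel⟩
      rw [this]
      exact hNm.preimage (measurable_const_add _)
    refine ⟨T, hTm, ?_, ?_⟩
    · -- mconv ω νsc T = 0
      rw [mconv_apply ω νsc hTm]
      have hae : (fun t => νsc ((t + ·) ⁻¹' T)) =ᵐ[ω] (fun _ => 0) := by
        refine Filter.eventuallyEq_of_mem (show Dω ∈ ae ω by rwa [mem_ae_iff]) fun t ht => ?_
        have hsub : ((t + ·) ⁻¹' T) ⊆ N := by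
          intro s hs
          have hmem : t + s ∈ (fun x => t + x) '' N :=
            mem_iInter₂.mp (hs : t + s ∈ T) t ht
          obtain ⟨n, hn, hns⟩ := hmem
          have : n = s := add_left_cancel hns
          rwa [← this]
        exact measure_mono_null hsub hN0
      rw [lintegral_congr_ae hae, lintegral_zero]
    · -- haar Tᶜ = 0
      have : Tᶜ = ⋃ d ∈ Dω, ((fun x => d + x) '' N)ᶜ := by
        simp [hT, compl_iInter]
      rw [this]
      refine (measure_biUnion_null_iff hDωc).mpr fun d _ => ?_
      have himgN : (fun x => d + x) '' N = (fun x => -d + x) ⁻¹' N := by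
        ext x
        simp only [mem_image, mem_preimage]
        constructor
        · rintro ⟨n, hn, rfl⟩; simpa
        · intro h; exact ⟨-d + x, h, by abel⟩
      rw [himgN, ← Set.preimage_compl, measure_preimage_add]
      exact hNc0
end

section
/- Let H be a locally compact abelian group and W ⊆ H a compact set. Then there exist four functions of the form uⱼ * ũⱼ with uⱼ ∈ C_c(H) (j = 1,…,4) such that (1/4)[ u₁*ũ₁ − u₂*ũ₂ + i·u₃*ũ₃ − i·u₄*ũ₄ ](x) = 1 for all x ∈ W, and all four functions have common compact support. -/
open MeasureTheory Pointwise

/-- Polarisation identity for complex numbers. -/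
lemma polarC (a b a' b' : ℂ) :
    (1/4 : ℂ) * ((a + 1 * b) * (a' + starRingEnd ℂ 1 * b')
      - (a + (-1) * b) * (a' + starRingEnd ℂ (-1) * b')
      + Complex.I * ((a + Complex.I * b) * (a' + starRingEnd ℂ Complex.I * b'))
      - Complex.I * ((a + (-Complex.I) * b) * (a' + starRingEnd ℂ (-Complex.I) * b')))
    = a * b' := by
  simp only [map_one, map_neg, Complex.conj_I]
  have h := Complex.I_mul_I
  ring_nf
  rw [Complex.I_sq]
  ring

/-- Let `H` be a locally compact abelian group with Haar measure and
`W ⊆ H` compact.  Then there exist four functions of the form `uⱼ * ũⱼ` with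
`uⱼ ∈ C_c(H)` such that
`(1/4)[u₁*ũ₁ − u₂*ũ₂ + i·u₃*ũ₃ − i·u₄*ũ₄](x) = 1` for all `x ∈ W`, and all four
functions `uⱼ * ũⱼ` are supported inside a common compact set. -/
theorem stmt_15 {H : Type*} [TopologicalSpace H] [AddCommGroup H] [IsTopologicalAddGroup H]
    [LocallyCompactSpace H] [T2Space H] [MeasurableSpace H] [BorelSpace H]
    (haar : Measure H) [haar.IsAddHaarMeasure]
    (W : Set H) (hW : IsCompact W) :
    ∃ (u : Fin 4 → H → ℂ) (S : Set H), IsCompact S ∧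
      (∀ j, Continuous (u j) ∧ HasCompactSupport (u j)) ∧
      (∀ j, tsupport (convC haar (u j) (tildeC (u j))) ⊆ S) ∧
      ∀ x ∈ W,
        (1/4 : ℂ) * (convC haar (u 0) (tildeC (u 0)) x
          - convC haar (u 1) (tildeC (u 1)) x
          + Complex.I * convC haar (u 2) (tildeC (u 2)) x
          - Complex.I * convC haar (u 3) (tildeC (u 3)) x) = 1 := by
  classical
  -- a bump function h₀ around 0
  obtain ⟨K, hKc, hK0⟩ := exists_compact_mem_nhds (0 : H)
  obtain ⟨h₀, hh₀K, -, hh₀supp, hh₀mem⟩ :=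
    exists_continuous_one_zero_of_isCompact hKc isClosed_empty (Set.disjoint_empty K)
  have hh₀cont : Continuous h₀ := h₀.continuous
  have hh₀int : Integrable h₀ haar := hh₀cont.integrable_of_hasCompactSupport hh₀supp
  set c : ℝ := ∫ t, h₀ t ∂haar with hc_def
  have hc : 0 < c := by
    rw [hc_def, integral_pos_iff_support_of_nonneg_ae
      (Filter.Eventually.of_forall fun x => (hh₀mem x).1) hh₀int]
    have h1 : interior K ⊆ Function.support h₀ := fun x hx => by
      rw [Function.mem_support, hh₀K (interior_subset hx)]; norm_num
    have h2 : (0 : ENNReal) < haar (interior K) :=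
      isOpen_interior.measure_pos haar ⟨0, mem_interior_iff_mem_nhds.2 hK0⟩
    exact h2.trans_le (measure_mono h1)
  -- the normalized bump, as a complex function
  set h : H → ℂ := fun t => ((c⁻¹ * h₀ t : ℝ) : ℂ) with h_def
  have hhcont : Continuous h := by
    exact Complex.continuous_ofReal.comp (continuous_const.mul hh₀cont)
  have hhsupp : HasCompactSupport h := by
    apply hh₀supp.comp_left (g := fun r : ℝ => ((c⁻¹ * r : ℝ) : ℂ))
    simp
  have hh_supp_sub : Function.support h ⊆ tsupport h₀ := by
    intro s hs
    apply subset_tsupport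
    intro h0
    apply hs
    simp [h_def, h0]
  have hh_real : ∀ s, starRingEnd ℂ (h s) = h s := fun s => Complex.conj_ofReal _
  have hh_int1 : ∫ s, h s ∂haar = 1 := by
    show ∫ s, ((c⁻¹ * h₀ s : ℝ) : ℂ) ∂haar = 1
    have e := integral_ofReal (𝕜 := ℂ) (μ := haar) (f := fun s => c⁻¹ * h₀ s)
    have e2 : (∫ x, c⁻¹ * h₀ x ∂haar) = 1 := by
      rw [MeasureTheory.integral_const_mul, ← hc_def, inv_mul_cancel₀ hc.ne']
    calc ∫ s, ((c⁻¹ * h₀ s : ℝ) : ℂ) ∂haar = ((∫ x, c⁻¹ * h₀ x ∂haar : ℝ) : ℂ) := e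
      _ = 1 := by rw [e2]; norm_num
  -- the plateau function g, equal to 1 on W + tsupport h₀
  have hWT : IsCompact (W + tsupport h₀) := hW.add hh₀supp
  obtain ⟨g₀, hg₀WT, -, hg₀supp, -⟩ :=
    exists_continuous_one_zero_of_isCompact hWT isClosed_empty (Set.disjoint_empty _)
  set g : H → ℂ := fun t => ((g₀ t : ℝ) : ℂ) with g_def
  have hgcont : Continuous g := Complex.continuous_ofReal.comp g₀.continuous
  have hgsupp : HasCompactSupport g := by
    apply hg₀supp.comp_left (g := fun r : ℝ => ((r : ℝ) : ℂ))
    simp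
  have hg_one : ∀ y ∈ W + tsupport h₀, g y = 1 := by
    intro y hy; rw [g_def]; simp [hg₀WT hy]
  -- the four functions
  set ε : Fin 4 → ℂ := ![1, -1, Complex.I, -Complex.I] with ε_def
  set u : Fin 4 → H → ℂ := fun j t => g t + ε j * h t with u_def
  have hucont : ∀ j, Continuous (u j) := fun j =>
    hgcont.add (continuous_const.mul hhcont)
  have husupp : ∀ j, HasCompactSupport (u j) := fun j =>
    hgsupp.add ((hhsupp.mul_left (f := fun _ => ε j)))
  -- the common compact support
  set Kc : Set H := tsupport g ∪ tsupport h with Kc_def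
  have hKcc : IsCompact Kc := hgsupp.union hhsupp
  have hu_supp : ∀ j, Function.support (u j) ⊆ Kc := by
    intro j t ht
    by_contra hmem
    simp only [Kc_def, Set.mem_union, not_or] at hmem
    apply ht
    have e1 : g t = 0 := image_eq_zero_of_notMem_tsupport hmem.1
    have e2 : h t = 0 := image_eq_zero_of_notMem_tsupport hmem.2
    simp [u_def, e1, e2]
  refine ⟨u, Kc + (-Kc), hKcc.add hKcc.neg, fun j => ⟨hucont j, husupp j⟩, ?_, ?_⟩
  · -- support of the convolutions
    intro j
    have hclosed : IsClosed (Kc + (-Kc)) := (hKcc.add hKcc.neg).isClosed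
    apply closure_minimal _ hclosed
    intro x hx
    rw [Function.mem_support] at hx
    have : ∃ t, u j t * tildeC (u j) (x - t) ≠ 0 := by
      by_contra hall
      push_neg at hall
      apply hx
      simp only [convC]
      simp [hall]
    obtain ⟨t, ht⟩ := this
    have h1 : u j t ≠ 0 := fun e => ht (by simp [e])
    have h2 : u j (t - x) ≠ 0 := by
      intro e
      apply ht
      simp only [tildeC, neg_sub, e, map_zero, mul_zero]
    refine Set.mem_add.mpr ⟨t, hu_supp j h1, -(t - x), Set.neg_mem_neg.mpr (hu_supp j h2), ?_⟩
    abel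
  · -- the main identity
    intro x hx
    -- the integrands
    set F : Fin 4 → H → ℂ := fun j t => u j t * tildeC (u j) (x - t) with F_def
    have hFcont : ∀ j, Continuous (F j) := by
      intro j
      exact (hucont j).mul
        ((continuous_star.comp ((hucont j).comp continuous_neg)).comp
          (continuous_const.sub continuous_id))
    have hFsupp : ∀ j, HasCompactSupport (F j) :=
      fun j => (husupp j).mul_right
    have hFint : ∀ j, Integrable (F j) haar :=
      fun j => (hFcont j).integrable_of_hasCompactSupport (hFsupp j)
    have key : ∀ t, (1/4 : ℂ) * (F 0 t - F 1 t + Complex.I * F 2 t - Complex.I * F 3 t)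
        = g t * starRingEnd ℂ (h (t - x)) := by
      intro t
      have e : ∀ j, F j t
          = (g t + ε j * h t) * (starRingEnd ℂ (g (t - x))
              + starRingEnd ℂ (ε j) * starRingEnd ℂ (h (t - x))) := by
        intro j
        simp only [F_def, u_def, tildeC, neg_sub, map_add, map_mul]
      rw [e 0, e 1, e 2, e 3]
      have hε0 : ε 0 = 1 := rfl
      have hε1 : ε 1 = -1 := rfl
      have hε2 : ε 2 = Complex.I := rfl
      have hε3 : ε 3 = -Complex.I := rfl
      rw [hε0, hε1, hε2, hε3]
      exact polarC (g t) (h t) (starRingEnd ℂ (g (t - x))) (starRingEnd ℂ (h (t - x)))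
    have conv_eq : ∀ j, convC haar (u j) (tildeC (u j)) x = ∫ t, F j t ∂haar := by
      intro j; rfl
    rw [conv_eq 0, conv_eq 1, conv_eq 2, conv_eq 3]
    have i01 : Integrable (fun t => F 0 t - F 1 t) haar := (hFint 0).sub (hFint 1)
    have i2 : Integrable (fun t => Complex.I * F 2 t) haar := (hFint 2).const_mul _
    have i3 : Integrable (fun t => Complex.I * F 3 t) haar := (hFint 3).const_mul _
    have i012 : Integrable (fun t => F 0 t - F 1 t + Complex.I * F 2 t) haar := i01.add i2
    rw [← integral_const_mul Complex.I (F 2), ← integral_const_mul Complex.I (F 3)]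
    rw [← integral_sub (hFint 0) (hFint 1)]
    rw [← integral_add i01 i2]
    rw [← integral_sub i012 i3]
    rw [← integral_const_mul]
    simp_rw [key]
    -- change of variables
    have trans : ∫ t, g t * starRingEnd ℂ (h (t - x)) ∂haar
        = ∫ s, g (s + x) * starRingEnd ℂ (h s) ∂haar := by
      rw [← integral_add_right_eq_self (fun t => g t * starRingEnd ℂ (h (t - x))) x]
      simp
    rw [trans]
    have plateau : ∀ s, g (s + x) * starRingEnd ℂ (h s) = h s := by
      intro s
      rw [hh_real]
      by_cases hs : h s = 0
      · simp [hs]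
      · have hsT : s ∈ tsupport h₀ := hh_supp_sub hs
        have : s + x ∈ W + tsupport h₀ := ⟨x, hx, s, hsT, add_comm x s⟩
        rw [hg_one _ this, one_mul]
    simp_rw [plateau]
    exact hh_int1
end
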